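/- arXiv:2511.04465 — 8 statements merged into one kernel-verified Lean document; each statement's English description precedes it below -/
import Mathlib

section
/- A payment rule φ is fraud-proof if and only if it is single-user fraud-proof. -/
open Finset

/-- An instance `I = (N, C, w)`: a finite nonempty set of users `N`, a finite set of
artists `C`, and nonnegative real engagement weights `w i j` (supported on
`users × artists`), such that every user has positive total engagement. -/
structure Inst where
  users : Finset ℕ
  artists : Finset ℕ
  w : ℕ → ℕ → ℝ
  users_nonempty : users.Nonempty
  w_nonneg : ∀ i j, 0 ≤ w i j
  w_supp : ∀ i j, w i j ≠ 0 → i ∈ users ∧ j ∈ artists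
  w_pos : ∀ i ∈ users, 0 < ∑ j ∈ artists, w i j

/-- `φ` is a payment rule (with revenue share `α`) on the class of instances satisfying `P`:
payments to artists are nonnegative and total `α·|N|`. -/
def IsRuleOn (P : Inst → Prop) (α : ℝ) (φ : Inst → ℕ → ℝ) : Prop :=
  ∀ I : Inst, P I →
    (∀ j ∈ I.artists, 0 ≤ φ I j) ∧ (∑ j ∈ I.artists, φ I j) = α * I.users.card

/-- `φ` is a payment rule (with revenue share `α`). -/
abbrev IsRule (α : ℝ) (φ : Inst → ℕ → ℝ) : Prop := IsRuleOn (fun _ => True) α φ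

/-- Fraud-proofness, relative to a class `P` of instances: for instances
`I = (N \ N̂, C, w)` and `I' = (N, C, w')` agreeing on the genuine users `N \ N̂`,
and any coalition `Ĉ ⊆ C`, the gain `φ_{I'}(Ĉ) − φ_I(Ĉ)` is at most `|N̂|`. -/
def FraudProofOn (P : Inst → Prop) (φ : Inst → ℕ → ℝ) : Prop :=
  ∀ I I' : Inst, P I → P I' →
    ∀ Nhat : Finset ℕ, Nhat ⊆ I'.users → I.users = I'.users \ Nhat →
      I.artists = I'.artists →
      (∀ i ∈ I.users, ∀ j ∈ I.artists, I.w i j = I'.w i j) →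
      ∀ Chat ⊆ I.artists,
        (∑ j ∈ Chat, φ I' j) - (∑ j ∈ Chat, φ I j) ≤ (Nhat.card : ℝ)

/-- Fraud-proofness. -/
abbrev FraudProof (φ : Inst → ℕ → ℝ) : Prop := FraudProofOn (fun _ => True) φ

/-- Single-user fraud-proofness: fraud-proofness restricted to `|N̂| = 1`. -/
def SingleFraudProof (φ : Inst → ℕ → ℝ) : Prop :=
  ∀ I I' : Inst,
    ∀ Nhat : Finset ℕ, Nhat.card = 1 → Nhat ⊆ I'.users → I.users = I'.users \ Nhat →
      I.artists = I'.artists →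
      (∀ i ∈ I.users, ∀ j ∈ I.artists, I.w i j = I'.w i j) →
      ∀ Chat ⊆ I.artists,
        (∑ j ∈ Chat, φ I' j) - (∑ j ∈ Chat, φ I j) ≤ 1

open Classical in
/-- The number of users whose engagement vectors differ between two instances
(on the same user and artist sets). -/
noncomputable def bribedCount (I I' : Inst) : ℕ :=
  (I.users.filter (fun i => ∃ j ∈ I.artists, I.w i j ≠ I'.w i j)).card

/-- Bribery-proofness, relative to a class `P` of instances: for instances `I, I'` on the
same users and artists whose engagement vectors differ for exactly `k` users, and any
coalition `Ĉ ⊆ C`, the gain `φ_{I'}(Ĉ) − φ_I(Ĉ)` is at most `k`. -/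
def BriberyProofOn (P : Inst → Prop) (φ : Inst → ℕ → ℝ) : Prop :=
  ∀ I I' : Inst, P I → P I' →
    I.users = I'.users → I.artists = I'.artists →
    ∀ Chat ⊆ I.artists,
      (∑ j ∈ Chat, φ I' j) - (∑ j ∈ Chat, φ I j) ≤ (bribedCount I I' : ℝ)

/-- Bribery-proofness. -/
abbrev BriberyProof (φ : Inst → ℕ → ℝ) : Prop := BriberyProofOn (fun _ => True) φ

/-- Single-user bribery-proofness: bribery-proofness restricted to `k = 1`. -/
def SingleBriberyProof (φ : Inst → ℕ → ℝ) : Prop :=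
  ∀ I I' : Inst,
    I.users = I'.users → I.artists = I'.artists →
    bribedCount I I' = 1 →
    ∀ Chat ⊆ I.artists,
      (∑ j ∈ Chat, φ I' j) - (∑ j ∈ Chat, φ I j) ≤ 1

/-- Anonymity (relative to a class `P`): permuting the labels of the users does not
affect the payoffs of the artists. -/
def AnonymousOn (P : Inst → Prop) (φ : Inst → ℕ → ℝ) : Prop :=
  ∀ I I' : Inst, P I → P I' →
    I.users = I'.users → I.artists = I'.artists →
    ∀ σ : Equiv.Perm ℕ, (∀ i ∈ I.users, σ i ∈ I.users) →
      (∀ i ∈ I.users, ∀ j ∈ I.artists, I.w i j = I'.w (σ i) j) →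
      ∀ j ∈ I.artists, φ I j = φ I' j

/-- Neutrality (relative to a class `P`): permuting the labels of the artists permutes
their payoffs. -/
def NeutralOn (P : Inst → Prop) (φ : Inst → ℕ → ℝ) : Prop :=
  ∀ I I' : Inst, P I → P I' →
    I.users = I'.users → I.artists = I'.artists →
    ∀ σ : Equiv.Perm ℕ, (∀ j ∈ I.artists, σ j ∈ I.artists) →
      (∀ i ∈ I.users, ∀ j ∈ I.artists, I.w i j = I'.w i (σ j)) →
      ∀ j ∈ I.artists, φ I j = φ I' (σ j)

/-- Neutrality. -/
abbrev Neutral (φ : Inst → ℕ → ℝ) : Prop := NeutralOn (fun _ => True) φ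

/-- No free-ridership (relative to a class `P`): an artist with zero total engagement
receives zero payment. -/
def NoFreeRideOn (P : Inst → Prop) (φ : Inst → ℕ → ℝ) : Prop :=
  ∀ I : Inst, P I → ∀ j ∈ I.artists, (∑ i ∈ I.users, I.w i j) = 0 → φ I j = 0

/-- Sybil-proofness: artists outside `C*` cannot change their combined payoff by
splitting/merging (user-by-user engagement towards `C*` and user totals outside `C*`
are preserved). -/
def SybilProof (φ : Inst → ℕ → ℝ) : Prop :=
  ∀ I I' : Inst, I.users = I'.users → I.artists ⊆ I'.artists →
    ∀ Cstar ⊆ I.artists,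
      (∀ i ∈ I.users, ∀ j ∈ Cstar, I.w i j = I'.w i j) →
      (∀ i ∈ I.users, ∑ j ∈ I.artists \ Cstar, I.w i j = ∑ j ∈ I'.artists \ Cstar, I'.w i j) →
      ∑ j ∈ I.artists \ Cstar, φ I j = ∑ j ∈ I'.artists \ Cstar, φ I' j

/-- Strong Sybil-proofness: as Sybil-proofness, but only total engagements
(aggregated over users) are preserved. -/
def StrongSybilProof (φ : Inst → ℕ → ℝ) : Prop :=
  ∀ I I' : Inst, I.users = I'.users → I.artists ⊆ I'.artists →
    ∀ Cstar ⊆ I.artists,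
      (∀ j ∈ Cstar, ∑ i ∈ I.users, I.w i j = ∑ i ∈ I'.users, I'.w i j) →
      (∑ i ∈ I.users, ∑ j ∈ I.artists \ Cstar, I.w i j
        = ∑ i ∈ I'.users, ∑ j ∈ I'.artists \ Cstar, I'.w i j) →
      ∑ j ∈ I.artists \ Cstar, φ I j = ∑ j ∈ I'.artists \ Cstar, φ I' j

/-- Engagement monotonicity: if artist `j*`'s engagement weakly increases while every
other artist's engagement weakly decreases, then `j*`'s payoff does not decrease. -/
def EngagementMonotone (φ : Inst → ℕ → ℝ) : Prop :=
  ∀ I I' : Inst, I.users = I'.users → I.artists = I'.artists →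
    ∀ jstar ∈ I.artists,
      (∀ i ∈ I.users, I.w i jstar ≤ I'.w i jstar) →
      (∀ i ∈ I.users, ∀ j ∈ I.artists, j ≠ jstar → I'.w i j ≤ I.w i j) →
      φ I jstar ≤ φ I' jstar

/-- Pigou-Dalton consistency: transferring `δ > 0` of engagement with artist `j` from a
user `i` with more engagement to a user `i'` with less (keeping everything else fixed,
and not overshooting) does not decrease `j`'s payoff. -/
def PigouDalton (φ : Inst → ℕ → ℝ) : Prop :=
  ∀ I I' : Inst, I.users = I'.users → I.artists = I'.artists →
    ∀ i ∈ I.users, ∀ i' ∈ I.users, i ≠ i' →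
      ∀ j ∈ I.artists, ∀ δ : ℝ,
        0 < δ → 0 < I.w i j - δ →
        I'.w i j = I.w i j - δ →
        I'.w i' j = I.w i' j + δ →
        I'.w i' j ≤ I'.w i j →
        (∀ k ∈ I.users, ∀ j' ∈ I.artists, j' ≠ j → I.w k j' = I'.w k j') →
        (∀ k ∈ I.users, k ≠ i → k ≠ i' → I.w k j = I'.w k j) →
        φ I j ≤ φ I' j

/-- User-addition monotonicity: adding one new user (with an arbitrary engagement
vector) does not decrease any artist's payoff. -/
def UserAdditionMonotone (φ : Inst → ℕ → ℝ) : Prop :=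
  ∀ I I' : Inst, I.artists = I'.artists →
    ∀ i₀ : ℕ, i₀ ∉ I.users → I'.users = insert i₀ I.users →
      (∀ i ∈ I.users, ∀ j ∈ I.artists, I.w i j = I'.w i j) →
      ∀ j ∈ I.artists, φ I j ≤ φ I' j

/-- The single-user instance `I_i = ({i}, C, w_i)` extracted from an instance `I`. -/
def Inst.single (I : Inst) (i : ℕ) (hi : i ∈ I.users) : Inst where
  users := {i}
  artists := I.artists
  w := fun i' j => if i' = i then I.w i j else 0
  users_nonempty := Finset.singleton_nonempty i
  w_nonneg := by
    intro i' j
    try dsimp only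
    split
    · exact I.w_nonneg i j
    · exact le_refl 0
  w_supp := by
    intro i' j h
    try dsimp only at h
    split at h
    · rename_i hii
      exact ⟨by simp [hii], (I.w_supp i j h).2⟩
    · exact absurd rfl h
  w_pos := by
    intro i' hi'
    have h : i' = i := Finset.mem_singleton.mp hi'
    simpa [h] using I.w_pos i hi

/-- User-additivity: each artist's payoff is the sum of the payoffs they would obtain in
the single-user instances. -/
def UserAdditive (φ : Inst → ℕ → ℝ) : Prop :=
  ∀ I : Inst, ∀ j ∈ I.artists,
    φ I j = ∑ i ∈ I.users.attach, φ (I.single i.1 i.2) j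

/-- The `GlobalProp` rule: artists are paid proportionally to their share of total
engagement on the platform. -/
noncomputable def globalProp (α : ℝ) (I : Inst) (j : ℕ) : ℝ :=
  α * I.users.card * (∑ i ∈ I.users, I.w i j) /
    (∑ i ∈ I.users, ∑ j' ∈ I.artists, I.w i j')

/-- The `UserProp` rule: an `α` fraction of each user's fee is split proportionally to
that user's engagement. -/
noncomputable def userProp (α : ℝ) (I : Inst) (j : ℕ) : ℝ :=
  α * ∑ i ∈ I.users, (I.w i j / ∑ j' ∈ I.artists, I.w i j')

open Classical in
/-- The `UserEQ` rule: an `α` fraction of each user's fee is split equally among the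
artists with which the user has positive engagement. -/
noncomputable def userEQ (α : ℝ) (I : Inst) (j : ℕ) : ℝ :=
  α * ∑ i ∈ I.users,
    ((if 0 < I.w i j then (1 : ℝ) else 0) /
      ((I.artists.filter (fun j' => 0 < I.w i j')).card : ℝ))

/-- The `ScaledUserProp` rule, given a choice `γ I` of the scaling parameter for each
instance: user `i` contributes `min(γ·‖w_i‖₁, 1)`, split proportionally to `w_i`. -/
noncomputable def scaledUserProp (γ : Inst → ℝ) (I : Inst) (j : ℕ) : ℝ :=
  ∑ i ∈ I.users,
    (min (γ I * ∑ j' ∈ I.artists, I.w i j') 1 * (I.w i j / ∑ j' ∈ I.artists, I.w i j'))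

lemma Inst.ext' {I I' : Inst} (hu : I.users = I'.users) (ha : I.artists = I'.artists)
    (hw : I.w = I'.w) : I = I' := by
  cases I; cases I'
  simp_all

/-- Intermediate instance: users `I'.users \ S`, weights restricted from `I'`. -/
noncomputable def midInst (I' : Inst) (S : Finset ℕ) (h : (I'.users \ S).Nonempty) : Inst where
  users := I'.users \ S
  artists := I'.artists
  w := fun i j => if i ∈ I'.users \ S ∧ j ∈ I'.artists then I'.w i j else 0
  users_nonempty := h
  w_nonneg := by
    intro i j; split
    · exact I'.w_nonneg i j
    · exact le_refl 0
  w_supp := by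
    intro i j hij; split at hij
    · rename_i hc; exact ⟨hc.1, hc.2⟩
    · exact absurd rfl hij
  w_pos := by
    intro i hi
    have : ∑ j ∈ I'.artists, (if i ∈ I'.users \ S ∧ j ∈ I'.artists then I'.w i j else 0)
        = ∑ j ∈ I'.artists, I'.w i j := by
      apply Finset.sum_congr rfl
      intro j hj
      simp [hi, hj]
    rw [this]
    exact I'.w_pos i (Finset.mem_sdiff.mp hi).1

lemma single_implies_general (φ : Inst → ℕ → ℝ) (h : SingleFraudProof φ) :
    ∀ n : ℕ, ∀ I I' : Inst, ∀ Nhat : Finset ℕ, Nhat.card = n →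
      Nhat ⊆ I'.users → I.users = I'.users \ Nhat →
      I.artists = I'.artists →
      (∀ i ∈ I.users, ∀ j ∈ I.artists, I.w i j = I'.w i j) →
      ∀ Chat ⊆ I.artists,
        (∑ j ∈ Chat, φ I' j) - (∑ j ∈ Chat, φ I j) ≤ (n : ℝ) := by
  intro n
  induction n with
  | zero =>
    intro I I' Nhat hcard hsub hu ha hw Chat hC
    have hN : Nhat = ∅ := Finset.card_eq_zero.mp hcard
    have hu' : I.users = I'.users := by rw [hu, hN, Finset.sdiff_empty]
    have hII : I = I' := by
      refine Inst.ext' hu' ha ?_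
      funext i j
      by_cases hij : i ∈ I.users ∧ j ∈ I.artists
      · exact hw i hij.1 j hij.2
      · have h1 : I.w i j = 0 := by
          by_contra hne; exact hij (I.w_supp i j hne)
        have h2 : I'.w i j = 0 := by
          by_contra hne
          have := I'.w_supp i j hne
          rw [← hu', ← ha] at this
          exact hij this
        rw [h1, h2]
    rw [hII]
    simp
  | succ n ih =>
    intro I I' Nhat hcard hsub hu ha hw Chat hC
    have hNne : Nhat.Nonempty := Finset.card_pos.mp (by omega)
    obtain ⟨i, hi⟩ := hNne
    set S : Finset ℕ := Nhat.erase i with hS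
    have hSsub : S ⊆ Nhat := Finset.erase_subset i Nhat
    have hScard : S.card = n := by rw [hS, Finset.card_erase_of_mem hi]; omega
    have hJne : (I'.users \ S).Nonempty := by
      obtain ⟨x, hx⟩ := I.users_nonempty
      refine ⟨x, ?_⟩
      rw [hu] at hx
      rw [Finset.mem_sdiff] at hx ⊢
      exact ⟨hx.1, fun hxS => hx.2 (hSsub hxS)⟩
    set J : Inst := midInst I' S hJne with hJ
    have hJu : J.users = I'.users \ S := rfl
    have hJa : J.artists = I'.artists := rfl
    have hJw : ∀ i' ∈ J.users, ∀ j ∈ J.artists, J.w i' j = I'.w i' j := by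
      intro i' hi' j hj
      exact if_pos ⟨hi', hj⟩
    -- step from I to J (removing user i)
    have hiJ : ({i} : Finset ℕ) ⊆ J.users := by
      intro x hx
      rw [Finset.mem_singleton] at hx
      rw [hJu, Finset.mem_sdiff]
      exact ⟨hsub (hx ▸ hi), hx ▸ Finset.notMem_erase i Nhat⟩
    have huIJ : I.users = J.users \ {i} := by
      rw [hu, hJu]
      ext x
      simp only [Finset.mem_sdiff, Finset.mem_singleton, hS, Finset.mem_erase]
      constructor
      · rintro ⟨hx1, hx2⟩
        exact ⟨⟨hx1, fun h' => hx2 h'.2⟩, fun h' => hx2 (h' ▸ hi)⟩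
      · rintro ⟨⟨hx1, hx2⟩, hx3⟩
        refine ⟨hx1, fun hxN => hx2 ⟨hx3, hxN⟩⟩
    have haIJ : I.artists = J.artists := by rw [ha, hJa]
    have hwIJ : ∀ i' ∈ I.users, ∀ j ∈ I.artists, I.w i' j = J.w i' j := by
      intro i' hi' j hj
      have hi'J : i' ∈ J.users := by
        rw [huIJ] at hi'; exact (Finset.mem_sdiff.mp hi').1
      rw [hw i' hi' j hj, ← hJw i' hi'J j (haIJ ▸ hj)]
    have step1 := h I J {i} (Finset.card_singleton i) hiJ huIJ haIJ hwIJ Chat hC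
    -- step from J to I' (removing the n users in S)
    have step2 := ih J I' S hScard (fun x hx => hsub (hSsub hx)) hJu hJa hJw Chat
      (by rw [← haIJ]; exact hC)
    push_cast
    linarith

theorem stmt0 (α : ℝ) (hα : α ∈ Set.Ioc (0 : ℝ) 1)
    (φ : Inst → ℕ → ℝ) (hφ : IsRule α φ) :
    FraudProof φ ↔ SingleFraudProof φ := by
  constructor
  · intro hFP I I' Nhat hcard hsub hu ha hw Chat hC
    have := hFP I I' trivial trivial Nhat hsub hu ha hw Chat hC
    rw [hcard] at this
    exact_mod_cast this
  · intro hSFP I I' _ _ Nhat hsub hu ha hw Chat hC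
    exact single_implies_general φ hSFP Nhat.card I I' Nhat rfl hsub hu ha hw Chat hC
end

section
/- If α = 1, then every fraud-proof payment rule is also bribery-proof. -/
open Finset

theorem stmt2 (φ : Inst → ℕ → ℝ) (hφ : IsRule 1 φ) (hfp : FraudProof φ) :
    BriberyProof φ := by
  classical
  intro I I' _ _ hu ha Chat hC
  set Nhat := I.users.filter (fun i => ∃ j ∈ I.artists, I.w i j ≠ I'.w i j) with hNdef
  have hk : bribedCount I I' = Nhat.card := by
    unfold bribedCount
    rw [hNdef]
  have hNsub : Nhat ⊆ I.users := Finset.filter_subset _ _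
  have hagree : ∀ i ∈ I.users, i ∉ Nhat → ∀ j ∈ I.artists, I.w i j = I'.w i j := by
    intro i hi hni j hj
    by_contra hne
    exact hni (Finset.mem_filter.mpr ⟨hi, ⟨j, hj, hne⟩⟩)
  rw [hk]
  by_cases hall : Nhat = I.users
  · -- trivial case: all users bribed
    have h1 : ∑ j ∈ Chat, φ I' j ≤ ∑ j ∈ I'.artists, φ I' j := by
      apply Finset.sum_le_sum_of_subset_of_nonneg (by rw [← ha]; exact hC)
      intro j hj _; exact ((hφ I' trivial).1 j hj)
    have h2 : (0:ℝ) ≤ ∑ j ∈ Chat, φ I j :=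
      Finset.sum_nonneg fun j hj => (hφ I trivial).1 j (hC hj)
    have h3 := (hφ I' trivial).2
    have h4 : (Nhat.card : ℝ) = I'.users.card := by rw [hall, hu]
    rw [h3] at h1
    rw [h4]
    linarith
  · -- main case
    have hne : (I.users \ Nhat).Nonempty := by
      rw [Finset.sdiff_nonempty]
      intro hsub
      exact hall (Finset.Subset.antisymm hNsub hsub)
    let J : Inst := {
      users := I.users \ Nhat
      artists := I.artists
      w := fun i j => if i ∈ I.users \ Nhat then I.w i j else 0
      users_nonempty := hne
      w_nonneg := by
        intro i j; split
        · exact I.w_nonneg i j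
        · exact le_rfl
      w_supp := by
        intro i j h; split at h
        · exact ⟨‹_›, (I.w_supp i j h).2⟩
        · exact absurd rfl h
      w_pos := by
        intro i hi
        have heq : ∀ j ∈ I.artists,
            (if i ∈ I.users \ Nhat then I.w i j else 0) = I.w i j := by
          intro j _; simp [hi]
        rw [Finset.sum_congr rfl heq]
        exact I.w_pos i (Finset.mem_sdiff.mp hi).1 }
    have hJu : J.users = I.users \ Nhat := rfl
    have hJa : J.artists = I.artists := rfl
    have hJw : ∀ i ∈ J.users, ∀ j, J.w i j = I.w i j := by
      intro i hi j
      show (if i ∈ I.users \ Nhat then I.w i j else 0) = I.w i j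
      simp [hJu ▸ hi]
    -- fraud-proofness from J to I'
    have h1 : (∑ j ∈ Chat, φ I' j) - (∑ j ∈ Chat, φ J j) ≤ (Nhat.card : ℝ) := by
      apply hfp J I' trivial trivial Nhat (hu ▸ hNsub) (by rw [hJu, hu]) (by rw [hJa, ha])
      · intro i hi j hj
        have hi' := hJu ▸ hi
        rw [hJw i hi]
        exact hagree i (Finset.mem_sdiff.mp hi').1 (Finset.mem_sdiff.mp hi').2 j (hJa ▸ hj)
      · rw [hJa]; exact hC
    -- fraud-proofness from J to I, on the complement coalition
    have h2 : (∑ j ∈ I.artists \ Chat, φ I j) - (∑ j ∈ I.artists \ Chat, φ J j)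
        ≤ (Nhat.card : ℝ) := by
      apply hfp J I trivial trivial Nhat hNsub hJu hJa
      · intro i hi j _; exact hJw i hi j
      · rw [hJa]; exact Finset.sdiff_subset
    -- totals
    have htI := (hφ I trivial).2
    have htJ := (hφ J trivial).2
    have hcard : (J.users.card : ℝ) = (I.users.card : ℝ) - Nhat.card := by
      rw [hJu, Finset.card_sdiff_of_subset hNsub, Nat.cast_sub (Finset.card_le_card hNsub)]
    have hsI : (∑ j ∈ I.artists \ Chat, φ I j) + (∑ j ∈ Chat, φ I j)
        = ∑ j ∈ I.artists, φ I j := Finset.sum_sdiff hC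
    have hsJ : (∑ j ∈ I.artists \ Chat, φ J j) + (∑ j ∈ Chat, φ J j)
        = ∑ j ∈ I.artists, φ J j := Finset.sum_sdiff hC
    rw [hJa] at htJ
    rw [htI] at hsI
    rw [htJ, hcard] at hsJ
    linarith
end

section
/- For every α ∈ (0,1], there exists a payment rule on instances with exactly two artists that is anonymous, neutral, satisfies no free-ridership, is bribery-proof, but is not fraud-proof. -/
open Finset

/-! ### Auxiliary material for `stmt3` -/

/-- A per-user split function for a two-artist instance: `gsplit g b t` is the share
given to an artist with whom the user has engagement `b`, the user's total being `t`.
If `g` is true we split proportionally, else proportionally to squares. -/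
noncomputable def gsplit (g : Bool) (b t : ℝ) : ℝ :=
  if g then b / t else b ^ 2 / (b ^ 2 + (t - b) ^ 2)

lemma gsplit_nonneg (g : Bool) {b t : ℝ} (hb : 0 ≤ b) (ht : 0 ≤ t) : 0 ≤ gsplit g b t := by
  unfold gsplit; split
  · exact div_nonneg hb ht
  · exact div_nonneg (sq_nonneg _) (by positivity)

lemma gsplit_zero (g : Bool) (t : ℝ) : gsplit g 0 t = 0 := by
  unfold gsplit; split <;> simp

lemma gsplit_pair (g : Bool) {a b t : ℝ} (ha : 0 ≤ a) (hb : 0 ≤ b) (hab : a + b = t)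
    (ht : 0 < t) : gsplit g a t + gsplit g b t = 1 := by
  unfold gsplit
  split
  · field_simp
    linarith
  · have h2 : (0:ℝ) < a ^ 2 + b ^ 2 := by nlinarith [sq_nonneg (a - b), mul_pos ht ht]
    have h1 : t - a = b := by linarith
    have h1' : t - b = a := by linarith
    rw [h1, h1', add_comm (b ^ 2) (a ^ 2), ← add_div, div_self h2.ne']

/-- The rule used in `stmt3`: an `α` fraction of each user's fee is split
proportionally if there are at most `M` users, and proportionally to squared
engagements otherwise. -/
noncomputable def tRule (α : ℝ) (M : ℕ) (I : Inst) (j : ℕ) : ℝ :=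
  α * ∑ i ∈ I.users,
    gsplit (decide (I.users.card ≤ M)) (I.w i j) (∑ j' ∈ I.artists, I.w i j')

/-- The instance with users `{0,…,n}`, artists `{0,1}`, and each user having
engagement `1` with artist `0` and `2` with artist `1`. -/
noncomputable def mkCE (n : ℕ) : Inst where
  users := Finset.range (n + 1)
  artists := {0, 1}
  w := fun i j => if i < n + 1 then (if j = 0 then 1 else if j = 1 then 2 else 0) else 0
  users_nonempty := ⟨0, by simp⟩
  w_nonneg := by
    intro i j
    split
    · split
      · norm_num
      · split <;> norm_num
    · exact le_refl 0
  w_supp := by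
    intro i j h
    split at h
    · rename_i hi
      refine ⟨by simpa using hi, ?_⟩
      split at h
      · simp_all
      · split at h
        · simp_all
        · exact absurd rfl h
    · exact absurd rfl h
  w_pos := by
    intro i hi
    rw [Finset.sum_pair (by norm_num : (0:ℕ) ≠ 1)]
    have hi' : i < n + 1 := by simpa using hi
    simp only [hi', if_true]
    norm_num

lemma mkCE_T (n : ℕ) {i : ℕ} (hi : i ∈ (mkCE n).users) :
    ∑ j' ∈ (mkCE n).artists, (mkCE n).w i j' = 3 := by
  have hi' : i < n + 1 := by simpa [mkCE] using hi
  show ∑ j' ∈ ({0,1} : Finset ℕ), (mkCE n).w i j' = 3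
  rw [Finset.sum_pair (by norm_num : (0:ℕ) ≠ 1)]
  simp [mkCE, hi']
  simp only [if_pos (show i ≤ n by omega)]
  norm_num

lemma gsplit_sum_artists (g : Bool) (I : Inst) (hI : I.artists.card = 2) {i : ℕ}
    (hi : i ∈ I.users) :
    ∑ j ∈ I.artists, gsplit g (I.w i j) (∑ j' ∈ I.artists, I.w i j') = 1 := by
  obtain ⟨a, b, hab, hC⟩ := Finset.card_eq_two.mp hI
  have hT := I.w_pos i hi
  simp only [hC, Finset.sum_pair hab] at hT ⊢
  exact gsplit_pair g (I.w_nonneg i a) (I.w_nonneg i b) rfl hT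

theorem stmt3 (α : ℝ) (hα : α ∈ Set.Ioc (0 : ℝ) 1) :
    ∃ φ : Inst → ℕ → ℝ,
      IsRuleOn (fun I => I.artists.card = 2) α φ ∧
      AnonymousOn (fun I => I.artists.card = 2) φ ∧
      NeutralOn (fun I => I.artists.card = 2) φ ∧
      NoFreeRideOn (fun I => I.artists.card = 2) φ ∧
      BriberyProofOn (fun I => I.artists.card = 2) φ ∧
      ¬ FraudProofOn (fun I => I.artists.card = 2) φ := by
  classical
  obtain ⟨hα0, hα1⟩ := hα
  set M : ℕ := ⌈(8:ℝ)/α⌉₊ with hMdef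
  have hMα : (8:ℝ) ≤ α * M := by
    have h1 : (8:ℝ)/α ≤ M := Nat.le_ceil _
    calc (8:ℝ) = α * (8/α) := by field_simp
      _ ≤ α * M := mul_le_mul_of_nonneg_left h1 hα0.le
  have hM1 : 1 ≤ M := by
    rcases Nat.eq_zero_or_pos M with h0 | h1
    · rw [h0] at hMα
      norm_num at hMα
    · exact h1
  refine ⟨tRule α M, ?_, ?_, ?_, ?_, ?_, ?_⟩
  · -- IsRuleOn
    intro I hI
    constructor
    · intro j hj
      exact mul_nonneg hα0.le (Finset.sum_nonneg fun i hi =>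
        gsplit_nonneg _ (I.w_nonneg i j) (Finset.sum_nonneg fun j' _ => I.w_nonneg i j'))
    · unfold tRule
      rw [← Finset.mul_sum, Finset.sum_comm]
      congr 1
      rw [Finset.sum_congr rfl (fun i hi => gsplit_sum_artists _ I hI hi)]
      simp
  · -- AnonymousOn
    intro I I' hI hI' hu hC σ hσmem hσw j hj
    have himg : I.users.image σ = I.users := by
      apply Finset.eq_of_subset_of_card_le
      · intro x hx
        obtain ⟨i, hi, rfl⟩ := Finset.mem_image.mp hx
        exact hσmem i hi
      · rw [Finset.card_image_of_injective _ σ.injective]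
    unfold tRule
    rw [← hu, ← hC]
    set g := decide (I.users.card ≤ M) with hg
    congr 1
    conv_rhs => rw [← himg]
    rw [Finset.sum_image (fun a _ b _ h => σ.injective h)]
    apply Finset.sum_congr rfl
    intro i hi
    rw [← hσw i hi j hj]
    congr 1
    exact Finset.sum_congr rfl fun j' hj' => hσw i hi j' hj'
  · -- NeutralOn
    intro I I' hI hI' hu hC σ hσmem hσw j hj
    have himg : I.artists.image σ = I.artists := by
      apply Finset.eq_of_subset_of_card_le
      · intro x hx
        obtain ⟨j', hj', rfl⟩ := Finset.mem_image.mp hx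
        exact hσmem j' hj'
      · rw [Finset.card_image_of_injective _ σ.injective]
    unfold tRule
    rw [← hu, ← hC]
    set g := decide (I.users.card ≤ M) with hg
    congr 1
    apply Finset.sum_congr rfl
    intro i hi
    rw [← hσw i hi j hj]
    congr 1
    conv_rhs => rw [← himg]
    rw [Finset.sum_image (fun a _ b _ h => σ.injective h)]
    exact Finset.sum_congr rfl fun j' hj' => hσw i hi j' hj'
  · -- NoFreeRideOn
    intro I hI j hj h0
    have hz : ∀ i ∈ I.users, I.w i j = 0 := fun i hi =>
      (Finset.sum_eq_zero_iff_of_nonneg (fun i _ => I.w_nonneg i j)).mp h0 i hi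
    unfold tRule
    rw [Finset.sum_eq_zero (fun i hi => by rw [hz i hi]; exact gsplit_zero _ _), mul_zero]
  · -- BriberyProofOn
    intro I I' hI hI' hu hC Chat hChat
    unfold tRule bribedCount
    rw [← hu, ← hC]
    set g := decide (I.users.card ≤ M) with hg
    set F := I.users.filter (fun i => ∃ j ∈ I.artists, I.w i j ≠ I'.w i j) with hF
    set d : ℕ → ℝ := fun i =>
      (∑ j ∈ Chat, gsplit g (I'.w i j) (∑ j' ∈ I.artists, I'.w i j')) -
      (∑ j ∈ Chat, gsplit g (I.w i j) (∑ j' ∈ I.artists, I.w i j')) with hd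
    have hstep : (∑ j ∈ Chat, α * ∑ i ∈ I.users, gsplit g (I'.w i j)
          (∑ j' ∈ I.artists, I'.w i j')) -
        (∑ j ∈ Chat, α * ∑ i ∈ I.users, gsplit g (I.w i j)
          (∑ j' ∈ I.artists, I.w i j')) = α * ∑ i ∈ I.users, d i := by
      rw [← Finset.mul_sum, ← Finset.mul_sum, ← mul_sub]
      congr 1
      rw [Finset.sum_comm, Finset.sum_comm (s := Chat), ← Finset.sum_sub_distrib]
    rw [hstep]
    have hd_le : ∀ i ∈ I.users, d i ≤ (if i ∈ F then (1:ℝ) else 0) := by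
      intro i hi
      by_cases hiF : i ∈ F
      · rw [if_pos hiF]
        have h1 : (∑ j ∈ Chat, gsplit g (I'.w i j) (∑ j' ∈ I.artists, I'.w i j')) ≤ 1 := by
          have hi' : i ∈ I'.users := hu ▸ hi
          calc (∑ j ∈ Chat, gsplit g (I'.w i j) (∑ j' ∈ I.artists, I'.w i j'))
              ≤ ∑ j ∈ I.artists, gsplit g (I'.w i j) (∑ j' ∈ I.artists, I'.w i j') :=
                Finset.sum_le_sum_of_subset_of_nonneg hChat (fun j _ _ =>
                  gsplit_nonneg _ (I'.w_nonneg i j)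
                    (Finset.sum_nonneg fun j' _ => I'.w_nonneg i j'))
            _ = 1 := by rw [hC]; exact gsplit_sum_artists g I' hI' hi'
        have h2 : (0:ℝ) ≤ ∑ j ∈ Chat, gsplit g (I.w i j) (∑ j' ∈ I.artists, I.w i j') :=
          Finset.sum_nonneg fun j _ => gsplit_nonneg _ (I.w_nonneg i j)
            (Finset.sum_nonneg fun j' _ => I.w_nonneg i j')
        simp only [hd]
        linarith
      · rw [if_neg hiF]
        have heq : ∀ j ∈ I.artists, I.w i j = I'.w i j := by
          intro j hj
          by_contra hne
          exact hiF (Finset.mem_filter.mpr ⟨hi, j, hj, hne⟩)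
        have hT : (∑ j' ∈ I.artists, I.w i j') = ∑ j' ∈ I.artists, I'.w i j' :=
          Finset.sum_congr rfl fun j' hj' => heq j' hj'
        have : d i = 0 := by
          simp only [hd]
          rw [sub_eq_zero]
          exact Finset.sum_congr rfl fun j hj => by rw [heq j (hChat hj), hT]
        rw [this]
    have hX : ∑ i ∈ I.users, d i ≤ (F.card : ℝ) := by
      calc ∑ i ∈ I.users, d i ≤ ∑ i ∈ I.users, (if i ∈ F then (1:ℝ) else 0) :=
            Finset.sum_le_sum hd_le
        _ = ∑ i ∈ I.users ∩ F, (1:ℝ) := Finset.sum_ite_mem _ _ _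
        _ = (F.card : ℝ) := by
            rw [Finset.inter_eq_right.mpr (Finset.filter_subset _ _), Finset.sum_const,
              nsmul_eq_mul, mul_one]
    calc α * ∑ i ∈ I.users, d i ≤ α * (F.card : ℝ) :=
          mul_le_mul_of_nonneg_left hX hα0.le
      _ ≤ 1 * (F.card : ℝ) := mul_le_mul_of_nonneg_right hα1 (Nat.cast_nonneg _)
      _ = (F.card : ℝ) := one_mul _
  · -- ¬ FraudProofOn
    intro h
    set I : Inst := mkCE (M - 1) with hIdef
    set I' : Inst := mkCE M with hI'def
    have husers : I.users = Finset.range M := by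
      show Finset.range (M - 1 + 1) = _
      congr 1
      omega
    have hcard : I.users.card = M := by rw [husers, Finset.card_range]
    have hcard' : I'.users.card = M + 1 := by
      show (Finset.range (M + 1)).card = _
      rw [Finset.card_range]
    have h2 : I.artists.card = 2 := by
      show ({0, 1} : Finset ℕ).card = 2
      decide
    have h2' : I'.artists.card = 2 := h2
    have hsub : ({M} : Finset ℕ) ⊆ I'.users := by
      intro x hx
      simp only [Finset.mem_singleton] at hx
      subst hx
      show M ∈ Finset.range (M + 1)
      simp
    have hdiff : I.users = I'.users \ ({M} : Finset ℕ) := by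
      rw [husers]
      show _ = Finset.range (M + 1) \ {M}
      ext x
      simp only [Finset.mem_range, Finset.mem_sdiff, Finset.mem_singleton]
      omega
    have hagree : ∀ i ∈ I.users, ∀ j ∈ I.artists, I.w i j = I'.w i j := by
      intro i hi j hj
      have hiM : i < M := by
        rw [husers] at hi
        simpa using hi
      show (if i < M - 1 + 1 then (if j = 0 then (1:ℝ) else if j = 1 then 2 else 0) else 0)
          = (if i < M + 1 then (if j = 0 then (1:ℝ) else if j = 1 then 2 else 0) else 0)
      rw [if_pos (show i < M - 1 + 1 by omega), if_pos (show i < M + 1 by omega)]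
    have key := h I I' h2 h2' {M} hsub hdiff rfl hagree {1}
      (by intro x hx; simp only [Finset.mem_singleton] at hx; subst hx
          show (1:ℕ) ∈ ({0,1} : Finset ℕ); decide)
    rw [Finset.card_singleton, Finset.sum_singleton, Finset.sum_singleton] at key
    have hw1 : ∀ i ∈ I.users, I.w i 1 = 2 := by
      intro i hi
      have hiM : i < M := by rw [husers] at hi; simpa using hi
      show (if i < M - 1 + 1 then (if (1:ℕ) = 0 then (1:ℝ) else if (1:ℕ) = 1 then 2 else 0) else 0) = 2
      rw [if_pos (show i < M - 1 + 1 by omega)]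
      norm_num
    have hw1' : ∀ i ∈ I'.users, I'.w i 1 = 2 := by
      intro i hi
      have hiM : i < M + 1 := Finset.mem_range.mp hi
      show (if i < M + 1 then (if (1:ℕ) = 0 then (1:ℝ) else if (1:ℕ) = 1 then 2 else 0) else 0) = 2
      rw [if_pos hiM]
      norm_num
    have hflag : decide (I.users.card ≤ M) = true := by
      rw [hcard]; simp
    have hflag' : decide (I'.users.card ≤ M) = false := by
      rw [hcard']; simp
    have hφI : tRule α M I 1 = α * (M * (2/3 : ℝ)) := by
      unfold tRule
      rw [hflag]
      rw [Finset.sum_congr rfl (fun i hi => ?_), Finset.sum_const, hcard, nsmul_eq_mul]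
      rw [mkCE_T _ hi, hw1 i hi]
      unfold gsplit
      norm_num
    have hφI' : tRule α M I' 1 = α * ((M + 1 : ℕ) * (4/5 : ℝ)) := by
      unfold tRule
      rw [hflag']
      rw [Finset.sum_congr rfl (fun i hi => ?_), Finset.sum_const, hcard', nsmul_eq_mul]
      rw [mkCE_T _ hi, hw1' i hi]
      unfold gsplit
      norm_num
    rw [hφI, hφI'] at key
    push_cast at key
    nlinarith [hMα, hα0.le]
end

section
/- For every α ∈ (0,1), there exists a payment rule on instances with exactly two artists that is fraud-proof but not bribery-proof. -/
open Finset

noncomputable section StmtFourAux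

/-- The minimum-labelled artist (0 if there are none). -/
def j1 (I : Inst) : ℕ := if h : I.artists.Nonempty then I.artists.min' h else 0

lemma j1_mem {I : Inst} (h : I.artists.Nonempty) : j1 I ∈ I.artists := by
  rw [j1, dif_pos h]; exact I.artists.min'_mem h

lemma j1_congr {I I' : Inst} (h : I.artists = I'.artists) : j1 I = j1 I' := by
  have key : ∀ (s t : Finset ℕ), s = t →
      (if h : s.Nonempty then s.min' h else 0) = (if h : t.Nonempty then t.min' h else 0) := by
    intro s t e; subst e; rfl
  exact key _ _ h

/-- The clamped payment to the minimum artist. -/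
def myT (α : ℝ) (I : Inst) : ℝ :=
  max 0 (min (α * I.users.card)
    ((3 - α) / 2 * (∑ i ∈ I.users, min (I.w i (j1 I)) 1) - (1 - α) * I.users.card))

/-- The payment rule used in `stmt4`. -/
def myPhi (α : ℝ) (I : Inst) (j : ℕ) : ℝ :=
  if j = j1 I then myT α I
  else if j ∈ I.artists then α * I.users.card - myT α I else 0

lemma myT_nonneg (α : ℝ) (I : Inst) : 0 ≤ myT α I := le_max_left 0 _

lemma myT_le (α : ℝ) (hα : 0 ≤ α) (I : Inst) : myT α I ≤ α * I.users.card :=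
  max_le (by positivity) (min_le_left _ _)

lemma myPhi_rule (α : ℝ) (hα : 0 ≤ α) :
    IsRuleOn (fun I => I.artists.card = 2) α (myPhi α) := by
  intro I hP
  have hne : I.artists.Nonempty := card_pos.mp (by omega)
  have hj1 : j1 I ∈ I.artists := j1_mem hne
  constructor
  · intro j hj
    by_cases h : j = j1 I
    · simp only [myPhi, if_pos h]; exact myT_nonneg α I
    · simp only [myPhi, if_neg h, if_pos hj]
      linarith [myT_le α hα I]
  · obtain ⟨j₂, hj₂⟩ : ∃ j₂, I.artists.erase (j1 I) = {j₂} :=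
      card_eq_one.mp (by rw [card_erase_of_mem hj1, hP])
    have hj₂mem : j₂ ∈ I.artists.erase (j1 I) := hj₂ ▸ mem_singleton_self j₂
    have hne' : j₂ ≠ j1 I := (mem_erase.mp hj₂mem).1
    have hj₂a : j₂ ∈ I.artists := (mem_erase.mp hj₂mem).2
    have hins : I.artists = insert (j1 I) {j₂} := by rw [← hj₂, insert_erase hj1]
    rw [hins, sum_insert (by simp [Ne.symm hne']), sum_singleton]
    have e1 : myPhi α I (j1 I) = myT α I := if_pos rfl
    have e2 : myPhi α I j₂ = α * I.users.card - myT α I := by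
      rw [myPhi, if_neg hne', if_pos hj₂a]
    rw [e1, e2]; ring

lemma clamp_le {A A' B B' u : ℝ} (hu : 0 ≤ u) (hA : A' ≤ A + u) (hB : B' ≤ B + u) :
    max 0 (min A' B') ≤ max 0 (min A B) + u := by
  refine max_le (add_nonneg (le_max_left 0 _) hu) ?_
  calc min A' B' ≤ min (A + u) (B + u) := min_le_min hA hB
    _ = min A B + u := min_add_add_right A B u
    _ ≤ max 0 (min A B) + u := add_le_add_left (le_max_right 0 _) u

lemma card_plus {I I' : Inst} {Nhat : Finset ℕ} (hsub : Nhat ⊆ I'.users)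
    (husers : I.users = I'.users \ Nhat) :
    (I'.users.card : ℝ) = I.users.card + Nhat.card := by
  have hle : Nhat.card ≤ I'.users.card := Finset.card_le_card hsub
  rw [husers, Finset.card_sdiff_of_subset hsub]
  push_cast [hle]
  ring

lemma myT_bounds (α : ℝ) (hα0 : 0 < α) (hα1 : α < 1) (I I' : Inst)
    (hPI : I.artists.card = 2)
    (Nhat : Finset ℕ) (hsub : Nhat ⊆ I'.users) (husers : I.users = I'.users \ Nhat)
    (hart : I.artists = I'.artists)
    (hw : ∀ i ∈ I.users, ∀ j ∈ I.artists, I.w i j = I'.w i j) :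
    myT α I' ≤ myT α I + Nhat.card ∧ myT α I ≤ myT α I' + (1 - α) * Nhat.card := by
  have hd : (0:ℝ) ≤ Nhat.card := Nat.cast_nonneg _
  have hne : I.artists.Nonempty := card_pos.mp (by omega)
  have hj1 : j1 I ∈ I.artists := j1_mem hne
  have hj : j1 I' = j1 I := (j1_congr hart).symm
  have hn : (I'.users.card : ℝ) = I.users.card + Nhat.card := card_plus hsub husers
  set e : ℝ := ∑ i ∈ Nhat, min (I'.w i (j1 I)) 1 with he_def
  have hx : ∑ i ∈ I'.users, min (I'.w i (j1 I')) 1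
      = (∑ i ∈ I.users, min (I.w i (j1 I)) 1) + e := by
    rw [hj, ← Finset.sum_sdiff hsub (f := fun i => min (I'.w i (j1 I)) 1)]
    rw [husers]
    congr 1
    refine Finset.sum_congr rfl fun i hi => ?_
    rw [hw i (by rw [husers]; exact hi) _ hj1]
  have he0 : 0 ≤ e := Finset.sum_nonneg fun i _ => le_min (I'.w_nonneg i _) zero_le_one
  have he1 : e ≤ (Nhat.card : ℝ) := by
    calc e ≤ ∑ _i ∈ Nhat, (1:ℝ) := Finset.sum_le_sum fun i _ => min_le_right _ _
      _ = Nhat.card := by simp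
  have hkey : myT α I' = max 0 (min (α * ((I.users.card : ℝ) + Nhat.card))
      ((3 - α) / 2 * ((∑ i ∈ I.users, min (I.w i (j1 I)) 1) + e)
        - (1 - α) * ((I.users.card : ℝ) + Nhat.card))) := by
    rw [myT, hx, hn]
  constructor
  · rw [hkey, myT]
    exact clamp_le hd (by nlinarith) (by nlinarith)
  · rw [hkey, myT]
    exact clamp_le (by nlinarith) (by nlinarith) (by nlinarith)

lemma myPhi_fraud (α : ℝ) (hα0 : 0 < α) (hα1 : α < 1) :
    FraudProofOn (fun I => I.artists.card = 2) (myPhi α) := by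
  intro I I' hPI hPI' Nhat hsub husers hart hw Chat hChat
  have hd : (0:ℝ) ≤ Nhat.card := Nat.cast_nonneg _
  have hn : (I'.users.card : ℝ) = I.users.card + Nhat.card := card_plus hsub husers
  obtain ⟨hb1, hb2⟩ := myT_bounds α hα0 hα1 I I' hPI Nhat hsub husers hart hw
  have hj : j1 I' = j1 I := (j1_congr hart).symm
  by_cases hC : Chat = I.artists
  · have h1 : ∑ j ∈ Chat, myPhi α I' j = α * I'.users.card := by
      rw [hC, hart]; exact (myPhi_rule α hα0.le I' hPI').2
    have h2 : ∑ j ∈ Chat, myPhi α I j = α * I.users.card := by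
      rw [hC]; exact (myPhi_rule α hα0.le I hPI).2
    rw [h1, h2, hn]; nlinarith
  · have hlt : Chat.card < 2 := by
      have := Finset.card_lt_card (ssubset_of_subset_of_ne hChat hC)
      omega
    have hcc : Chat.card = 0 ∨ Chat.card = 1 := by omega
    rcases hcc with h | h
    · rw [Finset.card_eq_zero.mp h]; simpa using hd
    · obtain ⟨j, rfl⟩ := Finset.card_eq_one.mp h
      have hja : j ∈ I.artists := hChat (mem_singleton_self j)
      rw [Finset.sum_singleton, Finset.sum_singleton]
      by_cases hjj : j = j1 I
      · simp only [myPhi, hj, if_pos hjj]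
        linarith
      · have hja' : j ∈ I'.artists := hart ▸ hja
        simp only [myPhi, hj, if_neg hjj, if_pos hja, if_pos hja']
        rw [hn]; nlinarith

end StmtFourAux

noncomputable section StmtFourBribe

def mkInst (n : ℕ) (hn : 0 < n) (g : ℕ → ℝ) (hg : ∀ i, 0 ≤ g i) : Inst where
  users := Finset.range n
  artists := {0, 1}
  w := fun i j => if i < n then (if j = 0 then g i else if j = 1 then 1 else 0) else 0
  users_nonempty := Finset.nonempty_range_iff.mpr (by omega)
  w_nonneg := by
    intro i j; split_ifs <;> first | exact hg i | norm_num
  w_supp := by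
    intro i j h
    split_ifs at h with h1 h2 h3
    · exact ⟨Finset.mem_range.mpr h1, by simp [h2]⟩
    · exact ⟨Finset.mem_range.mpr h1, by simp [h3]⟩
    · exact absurd rfl h
    · exact absurd rfl h
  w_pos := by
    intro i hi
    have hi' : i < n := Finset.mem_range.mp hi
    rw [Finset.sum_pair (by norm_num : (0:ℕ) ≠ 1)]
    simp only [hi', if_true, if_pos rfl]
    norm_num
    linarith [hg i]

lemma mkInst_users (n : ℕ) (hn : 0 < n) (g : ℕ → ℝ) (hg : ∀ i, 0 ≤ g i) :
    (mkInst n hn g hg).users = Finset.range n := rfl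

lemma mkInst_artists (n : ℕ) (hn : 0 < n) (g : ℕ → ℝ) (hg : ∀ i, 0 ≤ g i) :
    (mkInst n hn g hg).artists = {0, 1} := rfl

lemma mkInst_card (n : ℕ) (hn : 0 < n) (g : ℕ → ℝ) (hg : ∀ i, 0 ≤ g i) :
    (mkInst n hn g hg).artists.card = 2 := by
  rw [mkInst_artists]; decide

lemma mkInst_w0 (n : ℕ) (hn : 0 < n) (g : ℕ → ℝ) (hg : ∀ i, 0 ≤ g i)
    (i : ℕ) (hi : i < n) : (mkInst n hn g hg).w i 0 = g i := by
  show (if i < n then (if (0:ℕ) = 0 then g i else if (0:ℕ) = 1 then 1 else 0) else 0) = g i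
  simp [hi]

lemma mkInst_w_eq (n : ℕ) (hn : 0 < n) (g g' : ℕ → ℝ) (hg : ∀ i, 0 ≤ g i)
    (hg' : ∀ i, 0 ≤ g' i) (i j : ℕ) (heq : g i = g' i) :
    (mkInst n hn g hg).w i j = (mkInst n hn g' hg').w i j := by
  show (if i < n then (if j = 0 then g i else if j = 1 then 1 else 0) else 0)
    = (if i < n then (if j = 0 then g' i else if j = 1 then 1 else 0) else 0)
  split_ifs <;> simp [heq]

lemma j1_mkInst (n : ℕ) (hn : 0 < n) (g : ℕ → ℝ) (hg : ∀ i, 0 ≤ g i) :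
    j1 (mkInst n hn g hg) = 0 := by
  have hne : (mkInst n hn g hg).artists.Nonempty := ⟨0, by rw [mkInst_artists]; simp⟩
  rw [j1, dif_pos hne]
  refine le_antisymm (Finset.min'_le _ 0 ?_) (Nat.zero_le _)
  rw [mkInst_artists]; simp

lemma myT_mkInst (α : ℝ) (n : ℕ) (hn : 0 < n) (g : ℕ → ℝ) (hg : ∀ i, 0 ≤ g i)
    (hgle : ∀ i, g i ≤ 1) :
    myT α (mkInst n hn g hg)
      = max 0 (min (α * n) ((3 - α) / 2 * (∑ i ∈ Finset.range n, g i) - (1 - α) * n)) := by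
  rw [myT, j1_mkInst]
  have h1 : ∀ i ∈ Finset.range n, min ((mkInst n hn g hg).w i 0) 1 = g i := by
    intro i hi
    rw [mkInst_w0 n hn g hg i (Finset.mem_range.mp hi)]
    exact min_eq_left (hgle i)
  rw [mkInst_users, Finset.sum_congr rfl h1, Finset.card_range]

lemma sum_ite_zero (n : ℕ) (hn : 0 < n) (a c : ℝ) :
    ∑ i ∈ Finset.range n, (if i = 0 then a else c) = a + ((n : ℝ) - 1) * c := by
  have h0 : (0:ℕ) ∈ Finset.range n := Finset.mem_range.mpr hn
  rw [← Finset.add_sum_erase _ _ h0, if_pos rfl]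
  rw [Finset.sum_congr rfl (fun i hi => if_neg (Finset.mem_erase.mp hi).1)]
  rw [Finset.sum_const, nsmul_eq_mul, Finset.card_erase_of_mem h0, Finset.card_range]
  have hcast : ((n - 1 : ℕ) : ℝ) = (n : ℝ) - 1 := by
    have : 1 ≤ n := hn
    push_cast [this]
    ring
  rw [hcast]

lemma myPhi_not_bribery (α : ℝ) (hα0 : 0 < α) (hα1 : α < 1) :
    ¬ BriberyProofOn (fun I => I.artists.card = 2) (myPhi α) := by
  intro hB
  set n : ℕ := ⌈(3:ℝ)/α⌉₊ with hn_def
  have hnR : (3:ℝ)/α ≤ n := Nat.le_ceil _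
  have hn3 : (3:ℝ) < 3/α := by
    rw [lt_div_iff₀ hα0]; nlinarith
  have hn4 : (4:ℝ) ≤ n := by
    have h3 : (3:ℝ) < n := lt_of_lt_of_le hn3 hnR
    have h4 : 3 < n := by exact_mod_cast h3
    exact_mod_cast h4
  have hnpos : 0 < n := by
    have : (0:ℝ) < n := by linarith
    exact_mod_cast this
  have hαn : (3:ℝ) ≤ α * n := by
    rw [div_le_iff₀ hα0] at hnR; linarith
  set c : ℝ := (1 - α) * n / ((3 - α) / 2 * ((n:ℝ) - 1)) with hc_def
  have hden : (0:ℝ) < (3 - α) / 2 * ((n:ℝ) - 1) := by nlinarith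
  have hc0 : 0 ≤ c := by
    apply div_nonneg _ hden.le
    nlinarith
  have hc1 : c ≤ 1 := by
    rw [hc_def, div_le_one hden]
    nlinarith
  have hcsum : (3 - α) / 2 * (((n:ℝ) - 1) * c) = (1 - α) * n := by
    rw [hc_def, ← mul_assoc, mul_comm ((3 - α) / 2 * ((n:ℝ) - 1)),
      div_mul_cancel₀ _ hden.ne']
  set g : ℕ → ℝ := fun i => if i = 0 then 0 else c with hg_def
  set g' : ℕ → ℝ := fun i => if i = 0 then 1 else c with hg'_def
  have hg : ∀ i, 0 ≤ g i := by
    intro i; rw [hg_def]; dsimp only; split_ifs <;> [norm_num; exact hc0]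
  have hg' : ∀ i, 0 ≤ g' i := by
    intro i; rw [hg'_def]; dsimp only; split_ifs <;> [norm_num; exact hc0]
  have hgle : ∀ i, g i ≤ 1 := by
    intro i; rw [hg_def]; dsimp only; split_ifs <;> [norm_num; exact hc1]
  have hg'le : ∀ i, g' i ≤ 1 := by
    intro i; rw [hg'_def]; dsimp only; split_ifs <;> [norm_num; exact hc1]
  have hTI : myT α (mkInst n hnpos g hg) = 0 := by
    rw [myT_mkInst α n hnpos g hg hgle]
    have hs : ∑ i ∈ Finset.range n, g i = 0 + ((n:ℝ) - 1) * c := by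
      rw [hg_def]; exact sum_ite_zero n hnpos 0 c
    rw [hs]
    have h0 : (3 - α) / 2 * (0 + ((n:ℝ) - 1) * c) - (1 - α) * n = 0 := by
      linear_combination hcsum
    rw [h0, min_eq_right (by positivity : (0:ℝ) ≤ α * n)]
    simp
  have hTI' : myT α (mkInst n hnpos g' hg') = (3 - α) / 2 := by
    rw [myT_mkInst α n hnpos g' hg' hg'le]
    have hs : ∑ i ∈ Finset.range n, g' i = 1 + ((n:ℝ) - 1) * c := by
      rw [hg'_def]; exact sum_ite_zero n hnpos 1 c
    rw [hs]
    have h0 : (3 - α) / 2 * (1 + ((n:ℝ) - 1) * c) - (1 - α) * n = (3 - α) / 2 := by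
      linear_combination hcsum
    rw [h0, min_eq_right (by nlinarith : (3 - α) / 2 ≤ α * n)]
    exact max_eq_right (by nlinarith)
  -- bribed count is 1
  have hbc : bribedCount (mkInst n hnpos g hg) (mkInst n hnpos g' hg') = 1 := by
    classical
    have hfil : (mkInst n hnpos g hg).users.filter
        (fun i => ∃ j ∈ (mkInst n hnpos g hg).artists,
          (mkInst n hnpos g hg).w i j ≠ (mkInst n hnpos g' hg').w i j) = {0} := by
      ext i
      simp only [Finset.mem_filter, Finset.mem_singleton]
      constructor
      · rintro ⟨hi, j, hj, hnej⟩
        by_contra h0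
        exact hnej (mkInst_w_eq n hnpos g g' hg hg' i j
          (by rw [hg_def, hg'_def]; simp [h0]))
      · rintro rfl
        refine ⟨by rw [mkInst_users]; exact Finset.mem_range.mpr hnpos,
          0, by rw [mkInst_artists]; simp, ?_⟩
        rw [mkInst_w0 n hnpos g hg 0 hnpos, mkInst_w0 n hnpos g' hg' 0 hnpos,
          hg_def, hg'_def]
        norm_num
    rw [bribedCount, hfil]
    rfl
  have hsub : ({0} : Finset ℕ) ⊆ (mkInst n hnpos g hg).artists := by
    rw [mkInst_artists]; intro x hx; simp at hx; simp [hx]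
  have hkey := hB (mkInst n hnpos g hg) (mkInst n hnpos g' hg')
    (mkInst_card n hnpos g hg) (mkInst_card n hnpos g' hg') rfl rfl {0} hsub
  rw [Finset.sum_singleton, Finset.sum_singleton, hbc] at hkey
  have e1 : myPhi α (mkInst n hnpos g' hg') 0 = myT α (mkInst n hnpos g' hg') := by
    rw [myPhi, if_pos (j1_mkInst n hnpos g' hg').symm]
  have e2 : myPhi α (mkInst n hnpos g hg) 0 = myT α (mkInst n hnpos g hg) := by
    rw [myPhi, if_pos (j1_mkInst n hnpos g hg).symm]
  rw [e1, e2, hTI, hTI'] at hkey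
  norm_num at hkey
  linarith

end StmtFourBribe

theorem stmt4 (α : ℝ) (hα : α ∈ Set.Ioo (0 : ℝ) 1) :
    ∃ φ : Inst → ℕ → ℝ,
      IsRuleOn (fun I => I.artists.card = 2) α φ ∧
      FraudProofOn (fun I => I.artists.card = 2) φ ∧
      ¬ BriberyProofOn (fun I => I.artists.card = 2) φ := by
  obtain ⟨hα0, hα1⟩ := hα
  exact ⟨myPhi α, myPhi_rule α hα0.le, myPhi_fraud α hα0 hα1, myPhi_not_bribery α hα0 hα1⟩
end

section
/- The rule GlobalProp satisfies strong Sybil-proofness. -/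
open Finset

theorem stmt5 (α : ℝ) (hα : α ∈ Set.Ioc (0 : ℝ) 1) :
    StrongSybilProof (globalProp α) := by
  intro I I' hU hsub Cstar hCs hstar htot
  have hcard : I.users.card = I'.users.card := by rw [hU]
  have hnum : ∑ j ∈ I.artists \ Cstar, ∑ i ∈ I.users, I.w i j
      = ∑ j ∈ I'.artists \ Cstar, ∑ i ∈ I'.users, I'.w i j := by
    rw [Finset.sum_comm, Finset.sum_comm (s := I'.artists \ Cstar)]
    exact htot
  have hden : ∑ i ∈ I.users, ∑ j ∈ I.artists, I.w i j
      = ∑ i ∈ I'.users, ∑ j ∈ I'.artists, I'.w i j := by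
    rw [Finset.sum_comm, Finset.sum_comm (s := I'.users)]
    rw [← Finset.sum_sdiff hCs, ← Finset.sum_sdiff (hCs.trans hsub)]
    refine congrArg₂ (· + ·) hnum ?_
    exact Finset.sum_congr rfl (fun j hj => hstar j hj)
  unfold globalProp
  rw [← Finset.sum_div, ← Finset.mul_sum, ← Finset.sum_div, ← Finset.mul_sum,
      hnum, hden, hcard]
end

section
/- The rule GlobalProp is not fraud-proof and not bribery-proof: for every α ∈ (0,1] there exist a pair of instances violating the fraud-proofness condition and a pair of instances violating the bribery-proofness condition, each with only two artists. -/
open Finset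

section CounterExamples

/-- Fraud counterexample, honest instance: users 1..n, each with engagement 1 on artist 1. -/
def fraudI (n : ℕ) (hn : 1 ≤ n) : Inst where
  users := Finset.Ico 1 (n+1)
  artists := {0, 1}
  w := fun i j => if i ∈ Finset.Ico 1 (n+1) ∧ j = 1 then 1 else 0
  users_nonempty := ⟨1, by simp; omega⟩
  w_nonneg := by intro i j; split <;> norm_num
  w_supp := by
    intro i j h
    split at h
    · rename_i hc; exact ⟨hc.1, by simp [hc.2]⟩
    · exact absurd rfl h
  w_pos := by
    intro i hi
    rw [Finset.sum_pair (by decide : (0:ℕ) ≠ 1)]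
    simp [hi]

/-- Fraud counterexample, fraudulent instance: extra fake user 0 with weight n on artist 0. -/
def fraudI' (n : ℕ) (hn : 1 ≤ n) : Inst where
  users := Finset.range (n+1)
  artists := {0, 1}
  w := fun i j => if i = 0 ∧ j = 0 then (n:ℝ) else
      if i ∈ Finset.Ico 1 (n+1) ∧ j = 1 then 1 else 0
  users_nonempty := ⟨0, by simp⟩
  w_nonneg := by
    intro i j; split
    · positivity
    · split <;> norm_num
  w_supp := by
    intro i j h
    split at h
    · rename_i hc; refine ⟨by simp [hc.1], by simp [hc.2]⟩
    · split at h
      · rename_i hc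
        refine ⟨by simp at hc ⊢; omega, by simp [hc.2]⟩
      · exact absurd rfl h
  w_pos := by
    intro i hi
    rw [Finset.sum_pair (by decide : (0:ℕ) ≠ 1)]
    by_cases h0 : i = 0
    · subst h0; simp; positivity
    · simp at hi
      have hi' : i ∈ Finset.Ico 1 (n+1) := by simp; omega
      simp [h0, hi']

/-- Bribery counterexample, honest instance: users 0..n-1, each with engagement 1 on artist 1. -/
def bribeI (n : ℕ) (hn : 1 ≤ n) : Inst where
  users := Finset.range n
  artists := {0, 1}
  w := fun i j => if i ∈ Finset.range n ∧ j = 1 then 1 else 0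
  users_nonempty := ⟨0, by simp; omega⟩
  w_nonneg := by intro i j; split <;> norm_num
  w_supp := by
    intro i j h
    split at h
    · rename_i hc; exact ⟨hc.1, by simp [hc.2]⟩
    · exact absurd rfl h
  w_pos := by
    intro i hi
    rw [Finset.sum_pair (by decide : (0:ℕ) ≠ 1)]
    simp [hi]

/-- Bribery counterexample, bribed instance: user 0 moves all to artist 0 with weight n. -/
def bribeI' (n : ℕ) (hn : 1 ≤ n) : Inst where
  users := Finset.range n
  artists := {0, 1}
  w := fun i j => if i = 0 ∧ j = 0 then (n:ℝ) else
      if i ∈ Finset.range n ∧ i ≠ 0 ∧ j = 1 then 1 else 0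
  users_nonempty := ⟨0, by simp; omega⟩
  w_nonneg := by
    intro i j; split
    · positivity
    · split <;> norm_num
  w_supp := by
    intro i j h
    split at h
    · rename_i hc; refine ⟨by simp; omega, by simp [hc.2]⟩
    · split at h
      · rename_i hc; exact ⟨hc.1, by simp [hc.2.2]⟩
      · exact absurd rfl h
  w_pos := by
    intro i hi
    rw [Finset.sum_pair (by decide : (0:ℕ) ≠ 1)]
    by_cases h0 : i = 0
    · subst h0; simp; positivity
    · simp [h0, hi]

end CounterExamples
section Computations

variable (α : ℝ) (n : ℕ) (hn : 1 ≤ n)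

lemma fraudI_val : globalProp α (fraudI n hn) 0 = 0 := by
  have h0 : ∑ i ∈ (fraudI n hn).users, (fraudI n hn).w i 0 = 0 := by
    simp [fraudI]
  unfold globalProp
  rw [h0]
  simp

lemma fraudI'_val : globalProp α (fraudI' n hn) 0 = α * (n+1) * n / (2*n) := by
  have h0 : ∑ i ∈ (fraudI' n hn).users, (fraudI' n hn).w i 0 = n := by
    show ∑ i ∈ Finset.range (n+1), _ = (n:ℝ)
    rw [Finset.sum_congr rfl (fun i _ => by
      show (if i = 0 ∧ (0:ℕ) = 0 then (n:ℝ) else if i ∈ Finset.Ico 1 (n+1) ∧ (0:ℕ) = 1 then 1 else 0)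
        = if i = 0 then (n:ℝ) else 0
      by_cases h : i = 0 <;> simp [h])]
    rw [Finset.sum_ite_eq' (Finset.range (n+1)) 0 (fun _ => (n:ℝ))]
    simp
  have htot : ∑ i ∈ (fraudI' n hn).users, ∑ j ∈ (fraudI' n hn).artists, (fraudI' n hn).w i j
      = 2*n := by
    show ∑ i ∈ Finset.range (n+1), ∑ j ∈ ({0,1} : Finset ℕ), _ = 2*(n:ℝ)
    rw [Finset.sum_congr rfl (fun i _ => Finset.sum_pair (by decide : (0:ℕ) ≠ 1))]
    rw [Finset.sum_congr rfl (fun i hi => by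
      show ((if i = 0 ∧ (0:ℕ) = 0 then (n:ℝ) else if i ∈ Finset.Ico 1 (n+1) ∧ (0:ℕ) = 1 then 1 else 0)
        + (if i = 0 ∧ (1:ℕ) = 0 then (n:ℝ) else if i ∈ Finset.Ico 1 (n+1) ∧ (1:ℕ) = 1 then 1 else 0))
        = if i = 0 then (n:ℝ) else 1
      simp only [Finset.mem_range] at hi
      by_cases h : i = 0
      · simp [h]
      · have : i ∈ Finset.Ico 1 (n+1) := by simp; omega
        simp [h, this])]
    rw [← Finset.add_sum_erase _ _ (by simp : (0:ℕ) ∈ Finset.range (n+1))]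
    rw [Finset.sum_congr rfl (fun i hi => by
      have h : i ≠ 0 := (Finset.mem_erase.mp hi).1
      show (if i = 0 then (n:ℝ) else 1) = 1
      simp [h])]
    rw [Finset.sum_const]
    have hc : ((Finset.range (n+1)).erase 0).card = n := by
      rw [Finset.card_erase_of_mem (by simp)]; simp
    rw [hc, if_pos rfl]
    push_cast; ring
  unfold globalProp
  rw [h0, htot]
  have : ((fraudI' n hn).users.card : ℝ) = n + 1 := by
    show ((Finset.range (n+1)).card : ℝ) = n + 1
    simp
  rw [this]

lemma bribeI_val : globalProp α (bribeI n hn) 0 = 0 := by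
  have h0 : ∑ i ∈ (bribeI n hn).users, (bribeI n hn).w i 0 = 0 := by
    simp [bribeI]
  unfold globalProp
  rw [h0]
  simp

lemma bribeI'_val : globalProp α (bribeI' n hn) 0 = α * n * n / (2*n - 1) := by
  have h0 : ∑ i ∈ (bribeI' n hn).users, (bribeI' n hn).w i 0 = n := by
    show ∑ i ∈ Finset.range n, _ = (n:ℝ)
    rw [Finset.sum_congr rfl (fun i _ => by
      show (if i = 0 ∧ (0:ℕ) = 0 then (n:ℝ) else if i ∈ Finset.range n ∧ i ≠ 0 ∧ (0:ℕ) = 1 then 1 else 0)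
        = if i = 0 then (n:ℝ) else 0
      by_cases h : i = 0 <;> simp [h])]
    rw [Finset.sum_ite_eq' (Finset.range n) 0 (fun _ => (n:ℝ))]
    rw [if_pos (by simp; omega : (0:ℕ) ∈ Finset.range n)]
  have htot : ∑ i ∈ (bribeI' n hn).users, ∑ j ∈ (bribeI' n hn).artists, (bribeI' n hn).w i j
      = 2*n - 1 := by
    show ∑ i ∈ Finset.range n, ∑ j ∈ ({0,1} : Finset ℕ), _ = 2*(n:ℝ) - 1
    rw [Finset.sum_congr rfl (fun i _ => Finset.sum_pair (by decide : (0:ℕ) ≠ 1))]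
    rw [Finset.sum_congr rfl (fun i hi => by
      show ((if i = 0 ∧ (0:ℕ) = 0 then (n:ℝ) else if i ∈ Finset.range n ∧ i ≠ 0 ∧ (0:ℕ) = 1 then 1 else 0)
        + (if i = 0 ∧ (1:ℕ) = 0 then (n:ℝ) else if i ∈ Finset.range n ∧ i ≠ 0 ∧ (1:ℕ) = 1 then 1 else 0))
        = if i = 0 then (n:ℝ) else 1
      by_cases h : i = 0
      · simp [h]
      · simp [h, hi])]
    rw [← Finset.add_sum_erase _ _ (by simp; omega : (0:ℕ) ∈ Finset.range n)]
    rw [Finset.sum_congr rfl (fun i hi => by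
      have h : i ≠ 0 := (Finset.mem_erase.mp hi).1
      show (if i = 0 then (n:ℝ) else 1) = 1
      simp [h])]
    rw [Finset.sum_const]
    have hc : ((Finset.range n).erase 0).card = n - 1 := by
      rw [Finset.card_erase_of_mem (by simp; omega)]; simp
    rw [hc, if_pos rfl]
    have hcast : ((n - 1 : ℕ) : ℝ) = (n:ℝ) - 1 := by
      rw [Nat.cast_sub hn]; simp
    simp only [nsmul_eq_mul, hcast]
    ring
  unfold globalProp
  rw [h0, htot]
  have : ((bribeI' n hn).users.card : ℝ) = n := by
    show ((Finset.range n).card : ℝ) = n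
    simp
  rw [this]

end Computations

theorem stmt6 (α : ℝ) (hα : α ∈ Set.Ioc (0 : ℝ) 1) :
    ¬ FraudProofOn (fun I => I.artists.card = 2) (globalProp α) ∧
    ¬ BriberyProofOn (fun I => I.artists.card = 2) (globalProp α) := by
  obtain ⟨hα0, hα1⟩ := hα
  set n : ℕ := ⌈2/α⌉₊ with hn_def
  have h2α : (2:ℝ)/α ≤ n := Nat.le_ceil _
  have hαn : (2:ℝ) ≤ α * n := by
    rw [div_le_iff₀ hα0] at h2α
    linarith
  have hn : 1 ≤ n := Nat.ceil_pos.mpr (by positivity)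
  have hnR : (1:ℝ) ≤ n := by exact_mod_cast hn
  constructor
  · intro h
    have key := h (fraudI n hn) (fraudI' n hn) (by simp [fraudI]) (by simp [fraudI'])
      {0} (by intro x hx; simp at hx; simp [fraudI', hx])
      (by ext i; simp [fraudI, fraudI']; omega) rfl
      (by
        intro i hi j hj
        have hi0 : i ≠ 0 := by
          simp only [fraudI, Finset.mem_Ico] at hi; omega
        simp [fraudI, fraudI', hi0])
      {0} (by intro x hx; simp at hx; simp [fraudI, hx])
    rw [Finset.sum_singleton, Finset.sum_singleton, fraudI_val α n hn,
      fraudI'_val α n hn] at key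
    simp only [Finset.card_singleton, Nat.cast_one, sub_zero] at key
    rw [div_le_iff₀ (by positivity)] at key
    nlinarith
  · intro h
    have hbc : (bribedCount (bribeI n hn) (bribeI' n hn) : ℝ) ≤ 1 := by
      have : bribedCount (bribeI n hn) (bribeI' n hn) ≤ 1 := by
        classical
        unfold bribedCount
        have hsub : ((bribeI n hn).users.filter
            (fun i => ∃ j ∈ (bribeI n hn).artists, (bribeI n hn).w i j ≠ (bribeI' n hn).w i j))
            ⊆ {0} := by
          intro i hi
          simp only [Finset.mem_filter] at hi
          obtain ⟨hiu, j, hj, hne⟩ := hi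
          by_contra hi0
          simp only [Finset.mem_singleton] at hi0
          apply hne
          have hj01 : j = 0 ∨ j = 1 := by
            simpa [bribeI] using hj
          have hiu' : i ∈ Finset.range n := hiu
          rcases hj01 with rfl | rfl <;> simp [bribeI, bribeI', hi0, hiu']
        calc _ ≤ ({0} : Finset ℕ).card := Finset.card_le_card hsub
        _ = 1 := by simp
      exact_mod_cast this
    have key := h (bribeI n hn) (bribeI' n hn) (by simp [bribeI]) (by simp [bribeI']) rfl rfl
      {0} (by intro x hx; simp at hx; simp [bribeI, hx])
    rw [Finset.sum_singleton, Finset.sum_singleton, bribeI_val α n hn,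
      bribeI'_val α n hn] at key
    have key2 : α * n * n / (2*n - 1) ≤ 1 := by linarith
    rw [div_le_iff₀ (by linarith : (0:ℝ) < 2*(n:ℝ) - 1)] at key2
    nlinarith
end

section
/- GlobalProp is the only neutral payment rule satisfying strong Sybil-proofness: if a payment rule φ is neutral and strongly Sybil-proof, then for every instance I = (N, C, w) and every artist j ∈ C, φ_I(j) = α·|N| · (∑_{i∈N} w_{ij}) / (∑_{i∈N} ∑_{j'∈C} w_{ij'}). -/
open Finset

section AuxStmt7

open Classical

/-- Uniform instance: each user in `N` has engagement `t j / |N|` with artist `j ∈ A`. -/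
noncomputable def mkUnif (N A : Finset ℕ) (t : ℕ → ℝ) (hN : N.Nonempty)
    (ht : ∀ j ∈ A, 0 ≤ t j) (hpos : 0 < ∑ j ∈ A, t j) : Inst where
  users := N
  artists := A
  w := fun i j => if i ∈ N ∧ j ∈ A then t j / N.card else 0
  users_nonempty := hN
  w_nonneg := by
    intro i j
    split
    · next h => exact div_nonneg (ht j h.2) (Nat.cast_nonneg _)
    · exact le_refl 0
  w_supp := by
    intro i j h
    by_cases h' : i ∈ N ∧ j ∈ A
    · exact h'
    · simp [h'] at h
  w_pos := by
    intro i hi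
    have hc : (0:ℝ) < N.card := by exact_mod_cast Finset.card_pos.mpr hN
    have hrw : ∑ j ∈ A, (if i ∈ N ∧ j ∈ A then t j / (N.card : ℝ) else 0)
        = (∑ j ∈ A, t j) / N.card := by
      rw [Finset.sum_div]
      exact Finset.sum_congr rfl fun j hj => by simp [hi, hj]
    show 0 < ∑ j ∈ A, (if i ∈ N ∧ j ∈ A then t j / (N.card : ℝ) else 0)
    rw [hrw]
    positivity

lemma mkUnif_col (N A : Finset ℕ) (t : ℕ → ℝ) (hN : N.Nonempty)
    (ht : ∀ j ∈ A, 0 ≤ t j) (hpos : 0 < ∑ j ∈ A, t j) (j : ℕ) (hj : j ∈ A) :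
    ∑ i ∈ N, (mkUnif N A t hN ht hpos).w i j = t j := by
  have hc : ((N.card : ℝ)) ≠ 0 := by
    have := Finset.card_pos.mpr hN
    positivity
  have hrw : ∀ i ∈ N, (mkUnif N A t hN ht hpos).w i j = t j / N.card := by
    intro i hi
    simp [mkUnif, hi, hj]
  rw [Finset.sum_congr rfl hrw, Finset.sum_const, nsmul_eq_mul]
  field_simp

lemma mkUnif_tot (N A : Finset ℕ) (t : ℕ → ℝ) (hN : N.Nonempty)
    (ht : ∀ j ∈ A, 0 ≤ t j) (hpos : 0 < ∑ j ∈ A, t j) :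
    ∑ i ∈ N, ∑ j ∈ A, (mkUnif N A t hN ht hpos).w i j = ∑ j ∈ A, t j := by
  rw [Finset.sum_comm]
  exact Finset.sum_congr rfl fun j hj => mkUnif_col N A t hN ht hpos j hj

/-- Two-artist uniform instance with totals `a` (on `k`) and `b` (on `x`). -/
noncomputable def mkTwo (N : Finset ℕ) (k x : ℕ) (a b : ℝ) (hN : N.Nonempty) (hkx : k ≠ x)
    (ha : 0 ≤ a) (hb : 0 ≤ b) (hab : 0 < a + b) : Inst :=
  mkUnif N {k, x} (fun j => if j = k then a else b) hN
    (fun j _ => by split <;> assumption)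
    (by rw [Finset.sum_pair hkx, if_pos rfl, if_neg (Ne.symm hkx)]; exact hab)

lemma mkTwo_col_fst (N : Finset ℕ) (k x : ℕ) (a b : ℝ) (hN : N.Nonempty) (hkx : k ≠ x)
    (ha : 0 ≤ a) (hb : 0 ≤ b) (hab : 0 < a + b) :
    ∑ i ∈ N, (mkTwo N k x a b hN hkx ha hb hab).w i k = a := by
  have := mkUnif_col N {k, x} (fun j => if j = k then a else b) hN
    (fun j _ => by split <;> assumption)
    (by rw [Finset.sum_pair hkx, if_pos rfl, if_neg (Ne.symm hkx)]; exact hab)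
    k (Finset.mem_insert_self k {x})
  simpa [mkTwo] using this

lemma mkTwo_col_snd (N : Finset ℕ) (k x : ℕ) (a b : ℝ) (hN : N.Nonempty) (hkx : k ≠ x)
    (ha : 0 ≤ a) (hb : 0 ≤ b) (hab : 0 < a + b) :
    ∑ i ∈ N, (mkTwo N k x a b hN hkx ha hb hab).w i x = b := by
  have := mkUnif_col N {k, x} (fun j => if j = k then a else b) hN
    (fun j _ => by split <;> assumption)
    (by rw [Finset.sum_pair hkx, if_pos rfl, if_neg (Ne.symm hkx)]; exact hab)
    x (by simp)
  simpa [mkTwo, Ne.symm hkx] using this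

lemma mkTwo_tot (N : Finset ℕ) (k x : ℕ) (a b : ℝ) (hN : N.Nonempty) (hkx : k ≠ x)
    (ha : 0 ≤ a) (hb : 0 ≤ b) (hab : 0 < a + b) :
    ∑ i ∈ N, ∑ j ∈ ({k, x} : Finset ℕ), (mkTwo N k x a b hN hkx ha hb hab).w i j = a + b := by
  have := mkUnif_tot N {k, x} (fun j => if j = k then a else b) hN
    (fun j _ => by split <;> assumption)
    (by rw [Finset.sum_pair hkx, if_pos rfl, if_neg (Ne.symm hkx)]; exact hab)
  rw [mkTwo, this, Finset.sum_pair hkx, if_pos rfl, if_neg (Ne.symm hkx)]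

/-- Extension of an instance by extra (zero-engagement) artists. -/
noncomputable def Inst.ext2 (I : Inst) (A : Finset ℕ) (hA : I.artists ⊆ A) : Inst where
  users := I.users
  artists := A
  w := I.w
  users_nonempty := I.users_nonempty
  w_nonneg := I.w_nonneg
  w_supp := fun i j h => ⟨(I.w_supp i j h).1, hA (I.w_supp i j h).2⟩
  w_pos := fun i hi => lt_of_lt_of_le (I.w_pos i hi)
    (Finset.sum_le_sum_of_subset_of_nonneg hA fun j _ _ => I.w_nonneg i j)

lemma tot_pos (I : Inst) : 0 < ∑ i ∈ I.users, ∑ j ∈ I.artists, I.w i j :=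
  Finset.sum_pos (fun i hi => I.w_pos i hi) I.users_nonempty

lemma col_nonneg (I : Inst) (k : ℕ) : 0 ≤ ∑ i ∈ I.users, I.w i k :=
  Finset.sum_nonneg fun i _ => I.w_nonneg i k

lemma col_zero (I : Inst) (x : ℕ) (hx : x ∉ I.artists) : ∑ i ∈ I.users, I.w i x = 0 := by
  refine Finset.sum_eq_zero fun i _ => ?_
  by_contra h
  exact hx (I.w_supp i x h).2

lemma col_le_tot (I : Inst) (k : ℕ) (hk : k ∈ I.artists) :
    ∑ i ∈ I.users, I.w i k ≤ ∑ i ∈ I.users, ∑ j ∈ I.artists, I.w i j :=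
  Finset.sum_le_sum fun i _ => Finset.single_le_sum (fun j _ => I.w_nonneg i j) hk

lemma cancel_lemma {α : ℝ} {φ : Inst → ℕ → ℝ} (hφ : IsRule α φ) (I I' : Inst)
    (hcard : I.users.card = I'.users.card) (k : ℕ) (hk : k ∈ I.artists) (hk' : k ∈ I'.artists)
    (h : ∑ j ∈ I.artists \ {k}, φ I j = ∑ j ∈ I'.artists \ {k}, φ I' j) :
    φ I k = φ I' k := by
  have b1 := (hφ I trivial).2
  have b2 := (hφ I' trivial).2
  simp only [← Finset.erase_eq] at h
  have e1 := Finset.sum_erase_add I.artists (φ I) hk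
  have e2 := Finset.sum_erase_add I'.artists (φ I') hk'
  rw [hcard] at b1
  linarith

end AuxStmt7
section AuxStmt7b

/-- Column-sum form of the complement totals over an extended artist set. -/
lemma compl_sum (I : Inst) (k : ℕ) (hk : k ∈ I.artists) (S : Finset ℕ) (hS : I.artists ⊆ S) :
    ∑ i ∈ I.users, ∑ j ∈ S \ {k}, I.w i j
      = (∑ i ∈ I.users, ∑ j ∈ I.artists, I.w i j) - ∑ i ∈ I.users, I.w i k := by
  rw [Finset.sum_comm]
  have h1 : ∑ j ∈ S \ {k}, ∑ i ∈ I.users, I.w i j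
      = ∑ j ∈ I.artists \ {k}, ∑ i ∈ I.users, I.w i j := by
    refine (Finset.sum_subset (Finset.sdiff_subset_sdiff hS le_rfl) ?_).symm
    intro j hj hj'
    have hjk : j ≠ k := (Finset.mem_sdiff.mp hj).2 ∘ Finset.mem_singleton.mpr
    have : j ∉ I.artists := by
      intro hja
      exact hj' (Finset.mem_sdiff.mpr ⟨hja, by simpa using hjk⟩)
    exact col_zero I j this
  rw [h1]
  simp only [← Finset.erase_eq]
  have e1 := Finset.sum_erase_add I.artists (fun j => ∑ i ∈ I.users, I.w i j) hk
  have e2 : ∑ j ∈ I.artists, ∑ i ∈ I.users, I.w i j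
      = ∑ i ∈ I.users, ∑ j ∈ I.artists, I.w i j := Finset.sum_comm
  linarith

/-- Key reduction: the payoff of artist `k` only depends on its total engagement
`s` and the grand total `T` (and the user set). -/
lemma reduce_lemma {α : ℝ} {φ : Inst → ℕ → ℝ} (hφ : IsRule α φ) (hssp : StrongSybilProof φ)
    (I : Inst) (k : ℕ) (hk : k ∈ I.artists) (x : ℕ) (hkx : k ≠ x)
    (s T : ℝ) (hcol : ∑ i ∈ I.users, I.w i k = s)
    (htot : ∑ i ∈ I.users, ∑ j ∈ I.artists, I.w i j = T)
    (hs : 0 ≤ s) (hsT : s ≤ T) (hT : 0 < T) :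
    φ I k = φ (mkTwo I.users k x s (T - s) I.users_nonempty hkx hs
      (by linarith) (by linarith)) k := by
  set A' : Finset ℕ := insert x I.artists with hA'
  have hsub : I.artists ⊆ A' := Finset.subset_insert x I.artists
  set I'' : Inst := I.ext2 A' hsub with hI''
  have hkA' : k ∈ A' := Finset.mem_insert_of_mem hk
  -- complement sums
  have hcomplI : ∑ i ∈ I.users, ∑ j ∈ I.artists \ {k}, I.w i j = T - s := by
    rw [compl_sum I k hk I.artists le_rfl, hcol, htot]
  have hcomplI'' : ∑ i ∈ I.users, ∑ j ∈ A' \ {k}, I.w i j = T - s := by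
    rw [compl_sum I k hk A' hsub, hcol, htot]
  -- step 1 : φ I k = φ I'' k
  have step1 : φ I k = φ I'' k := by
    refine cancel_lemma hφ I I'' rfl k hk hkA' ?_
    refine hssp I I'' rfl hsub {k} (by simpa using hk) ?_ ?_
    · intro j hj; rfl
    · show ∑ i ∈ I.users, ∑ j ∈ I.artists \ {k}, I.w i j
        = ∑ i ∈ I.users, ∑ j ∈ A' \ {k}, I.w i j
      rw [hcomplI, hcomplI'']
  -- step 2 : φ B k = φ I'' k
  set B : Inst := mkTwo I.users k x s (T - s) I.users_nonempty hkx hs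
      (by linarith) (by linarith) with hB
  have hBartists : B.artists = {k, x} := rfl
  have hBusers : B.users = I.users := rfl
  have step2 : φ B k = φ I'' k := by
    refine cancel_lemma hφ B I'' rfl k (Finset.mem_insert_self k {x}) hkA' ?_
    refine hssp B I'' rfl ?_ {k} (by simp [hBartists]) ?_ ?_
    · show ({k, x} : Finset ℕ) ⊆ A'
      refine Finset.insert_subset hkA' ?_
      simp [hA']
    · intro j hj
      have hjk : j = k := Finset.mem_singleton.mp hj
      subst hjk
      show ∑ i ∈ I.users, B.w i j = ∑ i ∈ I.users, I.w i j
      rw [mkTwo_col_fst, hcol]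
    · show ∑ i ∈ I.users, ∑ j ∈ ({k, x} : Finset ℕ) \ {k}, B.w i j
        = ∑ i ∈ I.users, ∑ j ∈ A' \ {k}, I.w i j
      have hpair : ({k, x} : Finset ℕ) \ {k} = {x} := by
        ext y
        simp only [Finset.mem_sdiff, Finset.mem_insert, Finset.mem_singleton]
        constructor
        · rintro ⟨h1 | h1, h2⟩
          · exact absurd h1 h2
          · exact h1
        · rintro rfl
          exact ⟨Or.inr rfl, Ne.symm hkx⟩
      rw [hpair, hcomplI'']
      simp only [Finset.sum_singleton]
      exact mkTwo_col_snd _ _ _ _ _ _ _ _ _ _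
  rw [step1, ← step2]

end AuxStmt7b
section AuxStmt7c

lemma swap_lemma {φ : Inst → ℕ → ℝ} (hneutral : Neutral φ)
    (N : Finset ℕ) (hN : N.Nonempty) (k x : ℕ) (hkx : k ≠ x) (a b : ℝ)
    (ha : 0 ≤ a) (hb : 0 ≤ b) (hab : 0 < a + b) :
    φ (mkTwo N k x a b hN hkx ha hb hab) k
      = φ (mkTwo N k x b a hN hkx hb ha (by linarith)) x := by
  set I := mkTwo N k x a b hN hkx ha hb hab with hI
  set I' := mkTwo N k x b a hN hkx hb ha (by linarith) with hI'
  have h := hneutral I I' trivial trivial rfl rfl (Equiv.swap k x) ?_ ?_ k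
    (Finset.mem_insert_self k {x})
  · rw [Equiv.swap_apply_left] at h
    exact h
  · intro j hj
    show Equiv.swap k x j ∈ ({k, x} : Finset ℕ)
    have hj2 : j ∈ ({k, x} : Finset ℕ) := hj
    have hj' : j = k ∨ j = x := by simpa using hj2
    rcases hj' with rfl | rfl
    · simp [Equiv.swap_apply_left]
    · simp [Equiv.swap_apply_right]
  · intro i hi j hj
    have hiN : i ∈ N := hi
    have hj2 : j ∈ ({k, x} : Finset ℕ) := hj
    have hj' : j = k ∨ j = x := by simpa using hj2
    rcases hj' with rfl | rfl
    · show I.w i j = I'.w i (Equiv.swap j x j)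
      rw [Equiv.swap_apply_left]
      show (if i ∈ N ∧ j ∈ ({j, x} : Finset ℕ) then (if j = j then a else b) / N.card else 0)
        = (if i ∈ N ∧ x ∈ ({j, x} : Finset ℕ) then (if x = j then b else a) / N.card else 0)
      simp [hiN, Ne.symm hkx]
    · show I.w i j = I'.w i (Equiv.swap k j j)
      rw [Equiv.swap_apply_right]
      show (if i ∈ N ∧ j ∈ ({k, j} : Finset ℕ) then (if j = k then a else b) / N.card else 0)
        = (if i ∈ N ∧ k ∈ ({k, j} : Finset ℕ) then (if k = k then b else a) / N.card else 0)
      simp [hiN, Ne.symm hkx]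

lemma two_budget {α : ℝ} {φ : Inst → ℕ → ℝ} (hφ : IsRule α φ)
    (N : Finset ℕ) (hN : N.Nonempty) (k x : ℕ) (hkx : k ≠ x) (a b : ℝ)
    (ha : 0 ≤ a) (hb : 0 ≤ b) (hab : 0 < a + b) :
    φ (mkTwo N k x a b hN hkx ha hb hab) k + φ (mkTwo N k x a b hN hkx ha hb hab) x
      = α * N.card := by
  have h := (hφ (mkTwo N k x a b hN hkx ha hb hab) trivial).2
  rw [show (mkTwo N k x a b hN hkx ha hb hab).artists = {k, x} from rfl,
    Finset.sum_pair hkx] at h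
  exact h

lemma two_nonneg {α : ℝ} {φ : Inst → ℕ → ℝ} (hφ : IsRule α φ)
    (N : Finset ℕ) (hN : N.Nonempty) (k x : ℕ) (hkx : k ≠ x) (a b : ℝ)
    (ha : 0 ≤ a) (hb : 0 ≤ b) (hab : 0 < a + b) :
    0 ≤ φ (mkTwo N k x a b hN hkx ha hb hab) k :=
  (hφ (mkTwo N k x a b hN hkx ha hb hab) trivial).1 k (Finset.mem_insert_self k {x})

/-- The payoff of the "large" artist in a two-artist instance does not depend on the labels. -/
lemma indep_lemma {α : ℝ} {φ : Inst → ℕ → ℝ} (hφ : IsRule α φ)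
    (hneutral : Neutral φ) (hssp : StrongSybilProof φ)
    (N : Finset ℕ) (hN : N.Nonempty) (T : ℝ) (hT : 0 < T)
    (k x k' x' : ℕ) (hkx : k ≠ x) (hk'x' : k' ≠ x')
    (s : ℝ) (hs : 0 ≤ s) (hsT : s ≤ T) :
    φ (mkTwo N k x s (T - s) hN hkx hs (by linarith) (by linarith)) k
      = φ (mkTwo N k' x' s (T - s) hN hk'x' hs (by linarith) (by linarith)) k' := by
  have key : ∀ (p q r : ℕ) (hpq : p ≠ q) (hpr : p ≠ r),
      φ (mkTwo N p q s (T - s) hN hpq hs (by linarith) (by linarith)) p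
        = φ (mkTwo N p r s (T - s) hN hpr hs (by linarith) (by linarith)) p := by
    intro p q r hpq hpr
    have := reduce_lemma hφ hssp (mkTwo N p q s (T - s) hN hpq hs (by linarith) (by linarith))
      p (Finset.mem_insert_self p {q}) r hpr s T
      (mkTwo_col_fst N p q s (T - s) hN hpq hs (by linarith) (by linarith))
      (by show ∑ i ∈ N, ∑ j ∈ ({p, q} : Finset ℕ),
            (mkTwo N p q s (T - s) hN hpq hs (by linarith) (by linarith)).w i j = T
          rw [mkTwo_tot]; ring)
      hs hsT hT
    exact this
  by_cases hkk' : k = k'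
  · subst hkk'
    by_cases hxx' : x = x'
    · subst hxx'; rfl
    · exact key k x x' hkx hk'x'
  · calc φ (mkTwo N k x s (T - s) hN hkx hs (by linarith) (by linarith)) k
        = φ (mkTwo N k k' s (T - s) hN hkk' hs (by linarith) (by linarith)) k :=
          key k x k' hkx hkk'
      _ = φ (mkTwo N k k' (T - s) s hN hkk' (by linarith) hs (by linarith)) k' :=
          swap_lemma hneutral N hN k k' hkk' s (T - s) hs (by linarith) (by linarith)
      _ = φ (mkTwo N k' x' s (T - s) hN hk'x' hs (by linarith) (by linarith)) k' := by
          have := reduce_lemma hφ hssp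
            (mkTwo N k k' (T - s) s hN hkk' (by linarith) hs (by linarith))
            k' (Finset.mem_insert_of_mem (Finset.mem_singleton_self k')) x' hk'x' s T
            (mkTwo_col_snd N k k' (T - s) s hN hkk' (by linarith) hs (by linarith))
            (by show ∑ i ∈ N, ∑ j ∈ ({k, k'} : Finset ℕ),
                  (mkTwo N k k' (T - s) s hN hkk' (by linarith) hs (by linarith)).w i j = T
                rw [mkTwo_tot]; ring)
            hs hsT hT
          exact this

end AuxStmt7c
section AuxStmt7d

open Classical

/-- Canonical two-artist payoff function. -/
noncomputable def FF (φ : Inst → ℕ → ℝ) (N : Finset ℕ) (T : ℝ) (s : ℝ) : ℝ :=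
  if h : N.Nonempty ∧ 0 < T ∧ 0 ≤ s ∧ s ≤ T then
    φ (mkTwo N 0 1 s (T - s) h.1 (by norm_num) h.2.2.1
      (by linarith [h.2.2.2]) (by have := h.2.1; linarith)) 0
  else 0

lemma FF_eq (φ : Inst → ℕ → ℝ) (N : Finset ℕ) (T s : ℝ)
    (hN : N.Nonempty) (hT : 0 < T) (hs : 0 ≤ s) (hsT : s ≤ T) :
    FF φ N T s = φ (mkTwo N 0 1 s (T - s) hN (by norm_num) hs
      (by linarith) (by linarith)) 0 := by
  rw [FF, dif_pos ⟨hN, hT, hs, hsT⟩]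

variable {α : ℝ} {φ : Inst → ℕ → ℝ}

lemma FF_nonneg (hφ : IsRule α φ) (N : Finset ℕ) (T s : ℝ)
    (hN : N.Nonempty) (hT : 0 < T) (hs : 0 ≤ s) (hsT : s ≤ T) :
    0 ≤ FF φ N T s := by
  rw [FF_eq φ N T s hN hT hs hsT]
  exact two_nonneg hφ N hN 0 1 (by norm_num) s (T - s) hs (by linarith) (by linarith)

lemma FF_reduce (hφ : IsRule α φ) (hssp : StrongSybilProof φ)
    (I : Inst) (k : ℕ) (hk : k ∈ I.artists) (s T : ℝ)
    (hneutral : Neutral φ)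
    (hcol : ∑ i ∈ I.users, I.w i k = s)
    (htot : ∑ i ∈ I.users, ∑ j ∈ I.artists, I.w i j = T)
    (hs : 0 ≤ s) (hsT : s ≤ T) (hT : 0 < T) :
    φ I k = FF φ I.users T s := by
  have hN : I.users.Nonempty := I.users_nonempty
  rw [FF_eq φ I.users T s hN hT hs hsT]
  by_cases hk1 : k = 0
  · subst hk1
    have := reduce_lemma hφ hssp I 0 hk 1 (by norm_num) s T hcol htot hs hsT hT
    exact this
  · have h1 := reduce_lemma hφ hssp I k hk 0 hk1 s T hcol htot hs hsT hT
    rw [h1]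
    exact indep_lemma hφ hneutral hssp I.users hN T hT k 0 0 1 hk1 (by norm_num) s hs hsT

lemma FF_add (hφ : IsRule α φ) (hneutral : Neutral φ) (hssp : StrongSybilProof φ)
    (N : Finset ℕ) (hN : N.Nonempty) (T : ℝ) (hT : 0 < T)
    (a c : ℝ) (ha : 0 ≤ a) (hc : 0 ≤ c) (hacT : a + c ≤ T) :
    FF φ N T (a + c) = FF φ N T a + FF φ N T c := by
  set t3 : ℕ → ℝ := fun j => if j = 0 then a else if j = 1 then T - (a + c) else c with ht3def
  have ht3 : ∀ j ∈ ({0, 1, 2} : Finset ℕ), 0 ≤ t3 j := by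
    intro j _
    simp only [ht3def]
    split
    · exact ha
    split
    · linarith
    · exact hc
  have hsum3 : ∑ j ∈ ({0, 1, 2} : Finset ℕ), t3 j = T := by
    rw [show ({0, 1, 2} : Finset ℕ) = insert 0 (insert 1 {2}) from rfl,
      Finset.sum_insert (by norm_num), Finset.sum_insert (by norm_num),
      Finset.sum_singleton]
    simp only [ht3def]
    norm_num
    ring
  have hpos3 : 0 < ∑ j ∈ ({0, 1, 2} : Finset ℕ), t3 j := by rw [hsum3]; exact hT
  set B3 : Inst := mkUnif N {0, 1, 2} t3 hN ht3 hpos3 with hB3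
  set B2 : Inst := mkTwo N 0 1 (a + c) (T - (a + c)) hN (by norm_num) (by linarith)
    (by linarith) (by linarith) with hB2
  -- totals of B3
  have hcol0 : ∑ i ∈ N, B3.w i 0 = a := by
    have := mkUnif_col N {0, 1, 2} t3 hN ht3 hpos3 0 (by norm_num)
    simpa [ht3def] using this
  have hcol1 : ∑ i ∈ N, B3.w i 1 = T - (a + c) := by
    have := mkUnif_col N {0, 1, 2} t3 hN ht3 hpos3 1 (by norm_num)
    simpa [ht3def] using this
  have hcol2 : ∑ i ∈ N, B3.w i 2 = c := by
    have := mkUnif_col N {0, 1, 2} t3 hN ht3 hpos3 2 (by norm_num)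
    simpa [ht3def] using this
  have htot3 : ∑ i ∈ N, ∑ j ∈ ({0, 1, 2} : Finset ℕ), B3.w i j = T := by
    rw [hB3, mkUnif_tot N {0, 1, 2} t3 hN ht3 hpos3, hsum3]
  -- SSP between B2 and B3
  have hsd2 : ({0, 1} : Finset ℕ) \ {1} = {0} := by decide
  have hsd3 : ({0, 1, 2} : Finset ℕ) \ {1} = {0, 2} := by decide
  have hkey : φ B2 0 = φ B3 0 + φ B3 2 := by
    have h := hssp B2 B3 rfl
      (show ({0, 1} : Finset ℕ) ⊆ {0, 1, 2} by decide)
      {1} (show ({1} : Finset ℕ) ⊆ {0, 1} by decide)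
      (by
        intro j hj
        have hj1 : j = 1 := Finset.mem_singleton.mp hj
        subst hj1
        show ∑ i ∈ N, B2.w i 1 = ∑ i ∈ N, B3.w i 1
        rw [hcol1, hB2, mkTwo_col_snd])
      (by
        show ∑ i ∈ N, ∑ j ∈ ({0, 1} : Finset ℕ) \ {1}, B2.w i j
          = ∑ i ∈ N, ∑ j ∈ ({0, 1, 2} : Finset ℕ) \ {1}, B3.w i j
        rw [hsd2, hsd3]
        simp only [Finset.sum_singleton, Finset.sum_pair (by norm_num : (0:ℕ) ≠ 2),
          Finset.sum_add_distrib]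
        rw [hcol0, hcol2, hB2, mkTwo_col_fst])
    have h2 : ∑ j ∈ ({0, 1} : Finset ℕ) \ {1}, φ B2 j
        = ∑ j ∈ ({0, 1, 2} : Finset ℕ) \ {1}, φ B3 j := h
    rw [hsd2, hsd3, Finset.sum_singleton, Finset.sum_pair (by norm_num : (0:ℕ) ≠ 2)] at h2
    exact h2
  -- identify the three payoffs
  have e2 : φ B2 0 = FF φ N T (a + c) := by
    rw [FF_eq φ N T (a + c) hN hT (by linarith) hacT]
  have e0 : φ B3 0 = FF φ N T a :=
    FF_reduce hφ hssp B3 0 (show (0:ℕ) ∈ ({0,1,2} : Finset ℕ) by norm_num) a T hneutral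
      hcol0 htot3 ha (by linarith) hT
  have e3 : φ B3 2 = FF φ N T c :=
    FF_reduce hφ hssp B3 2 (show (2:ℕ) ∈ ({0,1,2} : Finset ℕ) by norm_num) c T hneutral
      hcol2 htot3 hc (by linarith) hT
  rw [← e2, hkey, e0, e3]

end AuxStmt7d
section AuxStmt7e

lemma mkTwo_congr (N : Finset ℕ) (k x : ℕ) (a b b' : ℝ) (hN : N.Nonempty) (hkx : k ≠ x)
    (ha : 0 ≤ a) (hb : 0 ≤ b) (hab : 0 < a + b) (hb' : 0 ≤ b') (hab' : 0 < a + b')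
    (h : b = b') :
    mkTwo N k x a b hN hkx ha hb hab = mkTwo N k x a b' hN hkx ha hb' hab' := by
  subst h; rfl

variable {α : ℝ} {φ : Inst → ℕ → ℝ}

lemma FF_compl (hφ : IsRule α φ) (hneutral : Neutral φ)
    (N : Finset ℕ) (hN : N.Nonempty) (T : ℝ) (hT : 0 < T)
    (s : ℝ) (hs : 0 ≤ s) (hsT : s ≤ T) :
    FF φ N T s + FF φ N T (T - s) = α * N.card := by
  rw [FF_eq φ N T s hN hT hs hsT, FF_eq φ N T (T - s) hN hT (by linarith) (by linarith)]
  have e1 : mkTwo N 0 1 (T - s) (T - (T - s)) hN (by norm_num) (by linarith)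
        (by linarith) (by linarith)
      = mkTwo N 0 1 (T - s) s hN (by norm_num) (by linarith) hs (by linarith) :=
    mkTwo_congr N 0 1 (T - s) (T - (T - s)) s hN (by norm_num) (by linarith)
      (by linarith) (by linarith) hs (by linarith) (by ring)
  rw [e1]
  have e2 := swap_lemma hneutral N hN 0 1 (by norm_num) (T - s) s (by linarith) hs
    (by linarith)
  rw [e2]
  exact two_budget hφ N hN 0 1 (by norm_num) s (T - s) hs (by linarith) (by linarith)

lemma FF_zero (hφ : IsRule α φ) (hneutral : Neutral φ) (hssp : StrongSybilProof φ)
    (N : Finset ℕ) (hN : N.Nonempty) (T : ℝ) (hT : 0 < T) :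
    FF φ N T 0 = 0 := by
  have h := FF_add hφ hneutral hssp N hN T hT 0 0 le_rfl le_rfl (by linarith)
  rw [show (0:ℝ) + 0 = 0 by norm_num] at h
  linarith

lemma FF_T (hφ : IsRule α φ) (hneutral : Neutral φ) (hssp : StrongSybilProof φ)
    (N : Finset ℕ) (hN : N.Nonempty) (T : ℝ) (hT : 0 < T) :
    FF φ N T T = α * N.card := by
  have h := FF_compl hφ hneutral N hN T hT 0 le_rfl (le_of_lt hT)
  rw [FF_zero hφ hneutral hssp N hN T hT, show T - 0 = T by ring] at h
  linarith

lemma FF_mono (hφ : IsRule α φ) (hneutral : Neutral φ) (hssp : StrongSybilProof φ)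
    (N : Finset ℕ) (hN : N.Nonempty) (T : ℝ) (hT : 0 < T)
    (a b : ℝ) (ha : 0 ≤ a) (hab : a ≤ b) (hbT : b ≤ T) :
    FF φ N T a ≤ FF φ N T b := by
  have h := FF_add hφ hneutral hssp N hN T hT a (b - a) ha (by linarith) (by linarith)
  rw [show a + (b - a) = b by ring] at h
  have h2 := FF_nonneg hφ N T (b - a) hN hT (by linarith) (by linarith)
  linarith

lemma FF_nat (hφ : IsRule α φ) (hneutral : Neutral φ) (hssp : StrongSybilProof φ)
    (N : Finset ℕ) (hN : N.Nonempty) (T : ℝ) (hT : 0 < T)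
    (m : ℕ) (hm : 0 < m) :
    ∀ kk : ℕ, kk ≤ m → FF φ N T (kk * (T / m)) = kk * FF φ N T (T / m) := by
  have hm' : (0:ℝ) < m := by exact_mod_cast hm
  have hTm : 0 < T / m := by positivity
  intro kk
  induction kk with
  | zero =>
    intro _
    rw [Nat.cast_zero, zero_mul, zero_mul]
    exact FF_zero hφ hneutral hssp N hN T hT
  | succ kk ih =>
    intro hkm
    have hkm' : kk ≤ m := Nat.le_of_succ_le hkm
    have hcast : ((kk:ℝ) + 1) ≤ (m:ℝ) := by exact_mod_cast hkm
    have hbound : (kk:ℝ) * (T / m) + T / m ≤ T := by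
      calc (kk:ℝ) * (T / m) + T / m = ((kk:ℝ) + 1) * (T / m) := by ring
        _ ≤ (m:ℝ) * (T / m) := mul_le_mul_of_nonneg_right hcast (le_of_lt hTm)
        _ = T := by field_simp
    have h1 : ((kk + 1 : ℕ) : ℝ) * (T / m) = (kk:ℝ) * (T / m) + T / m := by
      push_cast; ring
    rw [h1, FF_add hφ hneutral hssp N hN T hT ((kk:ℝ) * (T / m)) (T / m)
      (by positivity) (le_of_lt hTm) hbound, ih hkm']
    push_cast; ring

lemma FF_frac (hφ : IsRule α φ) (hneutral : Neutral φ) (hssp : StrongSybilProof φ)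
    (N : Finset ℕ) (hN : N.Nonempty) (T : ℝ) (hT : 0 < T)
    (m : ℕ) (hm : 0 < m) :
    FF φ N T (T / m) = α * N.card / m := by
  have hm' : (0:ℝ) < m := by exact_mod_cast hm
  have h := FF_nat hφ hneutral hssp N hN T hT m hm m le_rfl
  rw [show (m:ℝ) * (T / m) = T by field_simp] at h
  rw [FF_T hφ hneutral hssp N hN T hT] at h
  field_simp at h ⊢
  linarith

lemma FF_val (hφ : IsRule α φ) (hneutral : Neutral φ) (hssp : StrongSybilProof φ)
    (hα : 0 < α)
    (N : Finset ℕ) (hN : N.Nonempty) (T : ℝ) (hT : 0 < T)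
    (s : ℝ) (hs : 0 ≤ s) (hsT : s ≤ T) :
    FF φ N T s = α * N.card * s / T := by
  set B : ℝ := α * N.card with hBdef
  have hcard : (0:ℝ) < N.card := by exact_mod_cast Finset.card_pos.mpr hN
  have hB : 0 < B := by positivity
  have claim : ∀ m : ℕ, 0 < m → |FF φ N T s - B * s / T| ≤ B / m := by
    intro m hm
    have hm' : (0:ℝ) < m := by exact_mod_cast hm
    have hTm : 0 < T / m := by positivity
    set q : ℝ := FF φ N T (T / m) with hqdef
    have hq : q = B / m := FF_frac hφ hneutral hssp N hN T hT m hm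
    have hq0 : 0 < q := by rw [hq]; positivity
    set kk : ℕ := ⌊s * m / T⌋₊ with hkkdef
    have hk_le : (kk:ℝ) ≤ s * m / T := Nat.floor_le (by positivity)
    have hk_lt : s * m / T < kk + 1 := Nat.lt_floor_add_one _
    have hsmT : s * m / T ≤ m := by
      rw [div_le_iff₀ hT]
      calc s * m ≤ T * m := mul_le_mul_of_nonneg_right hsT (by positivity)
        _ = m * T := by ring
    have hkm : kk ≤ m := by
      have : (kk:ℝ) ≤ (m:ℝ) := le_trans hk_le hsmT
      exact_mod_cast this
    have hlow : (kk:ℝ) * (T / m) ≤ s := by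
      have h := mul_le_mul_of_nonneg_right hk_le (le_of_lt hTm)
      rw [show s * m / T * (T / m) = s by field_simp] at h
      exact h
    have hhigh : s ≤ ((kk:ℝ) + 1) * (T / m) := by
      have h := mul_le_mul_of_nonneg_right (le_of_lt hk_lt) (le_of_lt hTm)
      rw [show s * m / T * (T / m) = s by field_simp] at h
      exact h
    -- bounds on B * s / T
    have hmid_lo : (kk:ℝ) * q ≤ B * s / T := by
      have h1 : B * ((kk:ℝ) * (T / m)) / T ≤ B * s / T := by gcongr
      rw [show B * ((kk:ℝ) * (T / m)) / T = (kk:ℝ) * (B / m) by field_simp] at h1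
      rw [hq]; exact h1
    have hmid_hi : B * s / T ≤ ((kk:ℝ) + 1) * q := by
      have h1 : B * s / T ≤ B * (((kk:ℝ) + 1) * (T / m)) / T := by gcongr
      rw [show B * (((kk:ℝ) + 1) * (T / m)) / T = ((kk:ℝ) + 1) * (B / m) by
        field_simp] at h1
      rw [hq]; exact h1
    -- bounds on FF φ N T s
    have hFF_lo : (kk:ℝ) * q ≤ FF φ N T s := by
      have h1 : FF φ N T ((kk:ℝ) * (T / m)) ≤ FF φ N T s :=
        FF_mono hφ hneutral hssp N hN T hT _ s (by positivity) hlow hsT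
      rwa [FF_nat hφ hneutral hssp N hN T hT m hm kk hkm] at h1
    have hFF_hi : FF φ N T s ≤ ((kk:ℝ) + 1) * q := by
      by_cases hkk : kk < m
      · have hk1m : kk + 1 ≤ m := hkk
        have hk1T : ((kk:ℝ) + 1) * (T / m) ≤ T := by
          have : ((kk:ℝ) + 1) ≤ (m:ℝ) := by exact_mod_cast hk1m
          calc ((kk:ℝ) + 1) * (T / m) ≤ (m:ℝ) * (T / m) :=
                mul_le_mul_of_nonneg_right this (le_of_lt hTm)
            _ = T := by field_simp
        have h1 : FF φ N T s ≤ FF φ N T (((kk:ℝ) + 1) * (T / m)) :=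
          FF_mono hφ hneutral hssp N hN T hT s _ hs hhigh hk1T
        have h2 : FF φ N T (((kk + 1 : ℕ) : ℝ) * (T / m)) = ((kk + 1 : ℕ) : ℝ) * q :=
          FF_nat hφ hneutral hssp N hN T hT m hm (kk + 1) hk1m
        rw [show (((kk + 1 : ℕ) : ℝ)) = (kk:ℝ) + 1 by push_cast; ring] at h2
        rw [h2] at h1
        exact h1
      · have hkkm : kk = m := le_antisymm hkm (not_lt.mp hkk)
        have hsT' : T ≤ s := by
          have : (m:ℝ) * (T / m) ≤ s := by rw [hkkm] at hlow; exact hlow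
          rwa [show (m:ℝ) * (T / m) = T by field_simp] at this
        have hsval : s = T := le_antisymm hsT hsT'
        subst hsval
        rw [FF_T hφ hneutral hssp N hN s hT]
        have : ((kk:ℝ) + 1) * q = B + q := by
          rw [hkkm, hq]; field_simp
        rw [this, ← hBdef]
        linarith
    rw [abs_sub_le_iff]
    constructor
    · calc FF φ N T s - B * s / T ≤ ((kk:ℝ) + 1) * q - (kk:ℝ) * q := by linarith
        _ = q := by ring
        _ = B / m := hq
    · calc B * s / T - FF φ N T s ≤ ((kk:ℝ) + 1) * q - (kk:ℝ) * q := by linarith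
        _ = q := by ring
        _ = B / m := hq
  by_contra hne
  set d : ℝ := |FF φ N T s - B * s / T| with hddef
  have hd : 0 < d := by
    rw [hddef]
    apply abs_pos.mpr
    intro h
    exact hne (by linarith)
  obtain ⟨m, hm⟩ := exists_nat_gt (B / d)
  have hm0 : 0 < m := by
    by_contra h
    push_neg at h
    interval_cases m
    simp at hm
    have : 0 < B / d := by positivity
    linarith
  have h1 := claim m hm0
  have hm' : (0:ℝ) < m := by exact_mod_cast hm0
  have h2 : B / m < d := by
    rw [div_lt_iff₀ hm']
    have := (div_lt_iff₀ hd).mp hm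
    linarith
  linarith

end AuxStmt7e
theorem stmt7 (α : ℝ) (hα : α ∈ Set.Ioc (0 : ℝ) 1)
    (φ : Inst → ℕ → ℝ) (hφ : IsRule α φ)
    (hneutral : Neutral φ) (hssp : StrongSybilProof φ) :
    ∀ I : Inst, ∀ j ∈ I.artists,
      φ I j = α * I.users.card * (∑ i ∈ I.users, I.w i j) /
        (∑ i ∈ I.users, ∑ j' ∈ I.artists, I.w i j') := by
  intro I j hj
  have hT : 0 < ∑ i ∈ I.users, ∑ j' ∈ I.artists, I.w i j' := tot_pos I
  have hs : 0 ≤ ∑ i ∈ I.users, I.w i j := col_nonneg I j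
  have hsT : ∑ i ∈ I.users, I.w i j ≤ ∑ i ∈ I.users, ∑ j' ∈ I.artists, I.w i j' :=
    col_le_tot I j hj
  have h1 := FF_reduce hφ hssp I j hj (∑ i ∈ I.users, I.w i j)
    (∑ i ∈ I.users, ∑ j' ∈ I.artists, I.w i j') hneutral rfl rfl hs hsT hT
  rw [h1, FF_val hφ hneutral hssp hα.1 I.users I.users_nonempty _ hT _ hs hsT]
end

section
/- If a payment rule is user-addition monotone, then it is both fraud-proof and bribery-proof. -/
open Finset

theorem Inst.ext'_s10 {I J : Inst} (h1 : I.users = J.users) (h2 : I.artists = J.artists)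
    (h3 : I.w = J.w) : I = J := by
  cases I; cases J; simp_all

/-- Restriction of an instance to a nonempty subset of its users. -/
def Inst.restrict (I : Inst) (S : Finset ℕ) (hS : S.Nonempty) (hsub : S ⊆ I.users) : Inst where
  users := S
  artists := I.artists
  w := fun i j => if i ∈ S then I.w i j else 0
  users_nonempty := hS
  w_nonneg := by
    intro i j; split
    · exact I.w_nonneg i j
    · exact le_rfl
  w_supp := by
    intro i j h; split at h
    · exact ⟨‹i ∈ S›, (I.w_supp i j h).2⟩
    · exact absurd rfl h
  w_pos := by
    intro i hi; simpa [hi] using I.w_pos i (hsub hi)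

theorem Inst.restrict_self (I : Inst) (hS : I.users.Nonempty) (hsub : I.users ⊆ I.users) :
    I.restrict I.users hS hsub = I := by
  refine Inst.ext'_s10 rfl rfl ?_
  funext i j
  by_cases h : i ∈ I.users
  · simp [Inst.restrict, h]
  · have : I.w i j = 0 := by
      by_contra h'
      exact h (I.w_supp i j h').1
    simp [Inst.restrict, h, this]

theorem restrict_le (φ : Inst → ℕ → ℝ) (hmono : UserAdditionMonotone φ) (I : Inst) :
    ∀ n (S : Finset ℕ) (hS : S.Nonempty) (hsub : S ⊆ I.users), (I.users \ S).card = n →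
    ∀ j ∈ I.artists, φ (I.restrict S hS hsub) j ≤ φ I j := by
  intro n
  induction n with
  | zero =>
    intro S hS hsub hcard j hj
    have h0 : I.users \ S = ∅ := Finset.card_eq_zero.mp hcard
    have : S = I.users :=
      Finset.Subset.antisymm hsub (Finset.sdiff_eq_empty_iff_subset.mp h0)
    subst this
    rw [Inst.restrict_self]
  | succ n ih =>
    intro S hS hsub hcard j hj
    have hne : (I.users \ S).Nonempty := by
      rw [← Finset.card_pos, hcard]; omega
    obtain ⟨i₀, hi₀⟩ := hne
    have hi₀u : i₀ ∈ I.users := (Finset.mem_sdiff.mp hi₀).1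
    have hi₀S : i₀ ∉ S := (Finset.mem_sdiff.mp hi₀).2
    have hS' : (insert i₀ S).Nonempty := ⟨i₀, Finset.mem_insert_self _ _⟩
    have hsub' : insert i₀ S ⊆ I.users := Finset.insert_subset hi₀u hsub
    have hcard' : (I.users \ insert i₀ S).card = n := by
      rw [Finset.sdiff_insert, Finset.card_erase_of_mem hi₀, hcard]
      omega
    have step : φ (I.restrict S hS hsub) j ≤ φ (I.restrict (insert i₀ S) hS' hsub') j := by
      refine hmono (I.restrict S hS hsub) (I.restrict (insert i₀ S) hS' hsub') rfl i₀ hi₀S rfl ?_ j hj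
      intro i hi j' hj'
      have hi' : i ∈ S := hi
      simp [Inst.restrict, hi', Finset.mem_insert_of_mem hi']
    exact step.trans (ih (insert i₀ S) hS' hsub' hcard' j hj)

theorem gain_bound (α : ℝ) (φ : Inst → ℕ → ℝ) (hφ : IsRule α φ)
    (hmono : UserAdditionMonotone φ) (J : Inst) (S : Finset ℕ)
    (hS : S.Nonempty) (hsub : S ⊆ J.users) (Chat : Finset ℕ) (hChat : Chat ⊆ J.artists) :
    (∑ j ∈ Chat, φ J j) - (∑ j ∈ Chat, φ (J.restrict S hS hsub) j)
      ≤ α * ((J.users.card : ℝ) - (S.card : ℝ)) := by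
  set I := J.restrict S hS hsub with hIdef
  have hIart : I.artists = J.artists := rfl
  have hJ := hφ J trivial
  have hI := hφ I trivial
  have hsum1 : (∑ j ∈ J.artists \ Chat, φ J j) + (∑ j ∈ Chat, φ J j)
      = α * J.users.card := by rw [Finset.sum_sdiff hChat]; exact hJ.2
  have hsum2 : (∑ j ∈ J.artists \ Chat, φ I j) + (∑ j ∈ Chat, φ I j)
      = α * S.card := by
    rw [Finset.sum_sdiff hChat]
    exact hI.2
  have hle : ∑ j ∈ J.artists \ Chat, φ I j ≤ ∑ j ∈ J.artists \ Chat, φ J j := by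
    refine Finset.sum_le_sum fun j hj => ?_
    exact restrict_le φ hmono J _ S hS hsub rfl j (Finset.mem_sdiff.mp hj).1
  have hIcard : (I.users.card : ℝ) = S.card := rfl
  nlinarith [hsum1, hsum2, hle]

theorem stmt10 (α : ℝ) (hα : α ∈ Set.Ioc (0 : ℝ) 1)
    (φ : Inst → ℕ → ℝ) (hφ : IsRule α φ)
    (hmono : UserAdditionMonotone φ) :
    FraudProof φ ∧ BriberyProof φ := by
  obtain ⟨hα0, hα1⟩ := hα
  constructor
  · -- Fraud-proofness
    intro I I' _ _ Nhat hNsub husers hart hw Chat hChat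
    have hsub : I.users ⊆ I'.users := by rw [husers]; exact Finset.sdiff_subset
    have hIeq : I = I'.restrict I.users I.users_nonempty hsub := by
      refine Inst.ext'_s10 rfl hart ?_
      funext i j
      by_cases hi : i ∈ I.users
      · by_cases hj : j ∈ I.artists
        · simp [Inst.restrict, hi, hw i hi j hj]
        · have h1 : I.w i j = 0 := by
            by_contra h'; exact hj (I.w_supp i j h').2
          have h2 : I'.w i j = 0 := by
            by_contra h'
            exact hj (hart ▸ (I'.w_supp i j h').2)
          simp [Inst.restrict, hi, h1, h2]
      · have h1 : I.w i j = 0 := by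
          by_contra h'; exact hi (I.w_supp i j h').1
        simp [Inst.restrict, hi, h1]
    have hChat' : Chat ⊆ I'.artists := hart ▸ hChat
    have hkey := gain_bound α φ hφ hmono I' I.users I.users_nonempty hsub Chat hChat'
    rw [← hIeq] at hkey
    have hcards : (I'.users.card : ℝ) - (I.users.card : ℝ) = Nhat.card := by
      have : I.users.card = I'.users.card - Nhat.card := by
        rw [husers, Finset.card_sdiff_of_subset hNsub]
      have hle : Nhat.card ≤ I'.users.card := Finset.card_le_card hNsub
      rw [this, Nat.cast_sub hle]; ring
    rw [hcards] at hkey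
    have : α * (Nhat.card : ℝ) ≤ Nhat.card := by
      nlinarith [Nat.cast_nonneg (α := ℝ) Nhat.card]
    linarith
  · -- Bribery-proofness
    intro I I' _ _ husers hart Chat hChat
    classical
    set B := I.users.filter (fun i => ∃ j ∈ I.artists, I.w i j ≠ I'.w i j) with hBdef
    have hBcount : (bribedCount I I' : ℝ) = (B.card : ℝ) := by
      rw [bribedCount, hBdef]
    rw [hBcount]
    have hBsub : B ⊆ I.users := Finset.filter_subset _ _
    by_cases hfull : I.users ⊆ B
    · -- everyone is bribed
      have hBeq : B = I.users := Finset.Subset.antisymm hBsub hfull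
      have hI := hφ I trivial
      have hI' := hφ I' trivial
      have h1 : ∑ j ∈ Chat, φ I' j ≤ α * I'.users.card := by
        rw [← hI'.2]
        refine Finset.sum_le_sum_of_subset_of_nonneg (hart ▸ hChat) ?_
        intro j hj _; exact hI'.1 j hj
      have h2 : 0 ≤ ∑ j ∈ Chat, φ I j :=
        Finset.sum_nonneg fun j hj => hI.1 j (hChat hj)
      have h3 : α * (I'.users.card : ℝ) ≤ I'.users.card := by
        nlinarith [Nat.cast_nonneg (α := ℝ) I'.users.card]
      rw [hBeq, husers]
      linarith
    · -- some genuine user remains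
      have hSne : (I.users \ B).Nonempty := Finset.sdiff_nonempty.mpr hfull
      set S := I.users \ B with hSdef
      have hSsub : S ⊆ I.users := Finset.sdiff_subset
      have hSsub' : S ⊆ I'.users := husers ▸ hSsub
      have hJeq : I.restrict S hSne hSsub = I'.restrict S hSne hSsub' := by
        refine Inst.ext'_s10 rfl hart ?_
        funext i j
        by_cases hi : i ∈ S
        · have hiu : i ∈ I.users := hSsub hi
          have hiB : i ∉ B := (Finset.mem_sdiff.mp hi).2
          have hag : ∀ j ∈ I.artists, I.w i j = I'.w i j := by
            intro j' hj'
            by_contra h'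
            exact hiB (Finset.mem_filter.mpr ⟨hiu, j', hj', h'⟩)
          by_cases hj : j ∈ I.artists
          · simp [Inst.restrict, hi, hag j hj]
          · have h1 : I.w i j = 0 := by
              by_contra h'; exact hj (I.w_supp i j h').2
            have h2 : I'.w i j = 0 := by
              by_contra h'; exact hj (hart ▸ (I'.w_supp i j h').2)
            simp [Inst.restrict, hi, h1, h2]
        · simp [Inst.restrict, hi]
      have hChat' : Chat ⊆ I'.artists := hart ▸ hChat
      have hkey := gain_bound α φ hφ hmono I' S hSne hSsub' Chat hChat'
      rw [← hJeq] at hkey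
      have hlow : ∑ j ∈ Chat, φ (I.restrict S hSne hSsub) j ≤ ∑ j ∈ Chat, φ I j := by
        refine Finset.sum_le_sum fun j hj => ?_
        exact restrict_le φ hmono I _ S hSne hSsub rfl j (hChat hj)
      have hcards : (I'.users.card : ℝ) - (S.card : ℝ) = B.card := by
        have h1 : S.card = I.users.card - B.card := Finset.card_sdiff_of_subset hBsub
        have h2 : B.card ≤ I.users.card := Finset.card_le_card hBsub
        rw [← husers, h1, Nat.cast_sub h2]; ring
      rw [hcards] at hkey
      have : α * (B.card : ℝ) ≤ B.card := by
        nlinarith [Nat.cast_nonneg (α := ℝ) B.card]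
      linarith
end
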